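/- arXiv:1412.7670 — 3 statements merged into one kernel-verified Lean document; each statement's English description precedes it below -/
import Mathlib

section
/- Every finite k-HST with k > 17 admits an embedding with distortion at most 16k/(k−17) into every real Banach space X with dim X ≥ log₂ D, where D is the maximal out-degree of a vertex in the rooted tree defining the k-HST. -/
noncomputable section

namespace Stmt

/-- `embedsM K dV dY` : there is a map of distortion at most `K` from the space with distance
function `dV` to the space with distance function `dY`. -/
def embedsM {V Y : Type*} (K : ℝ) (dV : V → V → ℝ) (dY : Y → Y → ℝ) : Prop :=
  ∃ f : V → Y, Function.Injective f ∧ ∃ r : ℝ, 0 < r ∧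
    ∀ a b, r * dV a b ≤ dY (f a) (f b) ∧ dY (f a) (f b) ≤ K * (r * dV a b)

/-- In a rooted tree given by a parent function, `v` is a leaf if it has no children. -/
def IsLeaf {T : Type*} (par : T → T) (v : T) : Prop := ∀ u, u ≠ v → par u ≠ v

/-- `w` is an ancestor of `v` (possibly `w = v`). -/
def IsAnc {T : Type*} (par : T → T) (w v : T) : Prop := ∃ m : ℕ, par^[m] v = w

/-- `w` is the least common ancestor of `x` and `y`. -/
def IsLCA {T : Type*} (par : T → T) (w x y : T) : Prop :=
  IsAnc par w x ∧ IsAnc par w y ∧ ∀ u, IsAnc par u x → IsAnc par u y → IsAnc par u w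

/-- The maximal out-degree of a vertex of the rooted tree with parent function `par`. -/
def maxOutDegree {T : Type*} [Fintype T] (par : T → T) : ℕ :=
  Finset.univ.sup fun v => Nat.card { u : T // u ≠ v ∧ par u = v }

section Helpers

open MeasureTheory Metric Finset
open scoped ENNReal

lemma exists_packing (E : Type*) [NormedAddCommGroup E] [NormedSpace ℝ E]
    [FiniteDimensional ℝ E] [MeasurableSpace E] [BorelSpace E] :
    ∃ S : Finset E, 2 ^ (Module.finrank ℝ E) ≤ S.card ∧ (∀ x ∈ S, ‖x‖ ≤ 1) ∧
      (∀ x ∈ S, ∀ y ∈ S, x ≠ y → 1/2 ≤ ‖x - y‖) := by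
  classical
  set n := Module.finrank ℝ E with hn
  have key : ∀ j : ℕ, j ≤ 2 ^ n → ∃ S : Finset E, S.card = j ∧ (∀ x ∈ S, ‖x‖ ≤ 1) ∧
      (∀ x ∈ S, ∀ y ∈ S, x ≠ y → 1/2 ≤ ‖x - y‖) := by
    intro j
    induction j with
    | zero => intro _; exact ⟨∅, by simp⟩
    | succ j ih =>
      intro hj
      obtain ⟨S, hcard, hnorm, hsep⟩ := ih (le_of_lt hj)
      set μ : Measure E := (Module.finBasis ℝ E).addHaar with hμ
      set B : ℝ≥0∞ := μ (ball (0:E) 1) with hBdef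
      set c : ℝ≥0∞ := ENNReal.ofReal ((1/2:ℝ) ^ n) with hcdef
      have hB0 : B ≠ 0 := (measure_ball_pos μ 0 one_pos).ne'
      have hBt : B ≠ ⊤ := measure_ball_lt_top.ne
      have hnot : ¬ (closedBall (0:E) 1 ⊆ ⋃ x ∈ S, closedBall x (1/2)) := by
        intro hsub
        have h1 : μ (closedBall (0:E) 1) = B := by
          rw [Measure.addHaar_closedBall μ 0 zero_le_one]; simp [hBdef]
        have h2 : μ (⋃ x ∈ S, closedBall x (1/2)) ≤ (j : ℝ≥0∞) * (c * B) := by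
          refine le_trans (measure_biUnion_finset_le S _) ?_
          have heq : ∀ x ∈ S, μ (closedBall x (1/2)) = c * B := fun x _ => by
            rw [Measure.addHaar_closedBall μ x (by norm_num : (0:ℝ) ≤ 1/2)]
          rw [Finset.sum_congr rfl heq, Finset.sum_const, hcard, nsmul_eq_mul]
        have hcB0 : c * B ≠ 0 := by
          simp only [ne_eq, mul_eq_zero, not_or]
          exact ⟨by simp [hcdef, ENNReal.ofReal_eq_zero, not_le], hB0⟩
        have hcBt : c * B ≠ ⊤ := ENNReal.mul_ne_top ENNReal.ofReal_ne_top hBt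
        have hjlt : (j : ℝ≥0∞) < (2:ℝ≥0∞) ^ n := by
          have : (j : ℝ≥0∞) < ((2 ^ n : ℕ) : ℝ≥0∞) := Nat.cast_lt.2 (Nat.lt_of_succ_le hj)
          simpa using this
        have hc1 : (2:ℝ≥0∞) ^ n * c = 1 := by
          rw [hcdef, show ((2:ℝ≥0∞)) = ENNReal.ofReal 2 by simp,
            ← ENNReal.ofReal_pow (by norm_num), ← ENNReal.ofReal_mul (by positivity),
            ← mul_pow]
          norm_num
        have : B < B := by
          calc B = μ (closedBall (0:E) 1) := h1.symm
            _ ≤ μ (⋃ x ∈ S, closedBall x (1/2)) := measure_mono hsub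
            _ ≤ (j : ℝ≥0∞) * (c * B) := h2
            _ < (2:ℝ≥0∞) ^ n * (c * B) := by
                rw [mul_comm _ (c * B), mul_comm _ (c * B)]; exact ENNReal.mul_lt_mul_right hcB0 hcBt hjlt
            _ = B := by rw [← mul_assoc, hc1, one_mul]
        exact absurd this (lt_irrefl _)
      obtain ⟨y, hy1, hy2⟩ := Set.not_subset.1 hnot
      simp only [Set.mem_iUnion, mem_closedBall, not_exists, not_le, exists_prop, not_and,
        dist_eq_norm] at hy2
      have hyS : y ∉ S := fun h => by
        have := hy2 y h; simp at this; linarith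
      refine ⟨insert y S, by rw [Finset.card_insert_of_notMem hyS, hcard], ?_, ?_⟩
      · intro x hx
        rcases Finset.mem_insert.1 hx with rfl | hx
        · simpa [dist_eq_norm] using hy1
        · exact hnorm x hx
      · intro a ha b hb hab
        rcases Finset.mem_insert.1 ha with ha' | ha' <;>
          rcases Finset.mem_insert.1 hb with hb' | hb'
        · exact absurd (ha'.trans hb'.symm) hab
        · subst ha'; exact le_of_lt (hy2 b hb')
        · subst hb'; rw [norm_sub_rev]; exact le_of_lt (hy2 a ha')
        · exact hsep a ha' b hb' hab
  obtain ⟨S, h1, h2, h3⟩ := key (2 ^ n) le_rfl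
  exact ⟨S, h1.ge, h2, h3⟩
open Finset

lemma geom_tail {c : ℝ} (h0 : 0 ≤ c) (h : c ≤ 1/17) (n : ℕ) :
    ∑ j ∈ Finset.range n, c ^ (j+1) ≤ 1/16 := by
  have hsum : ∑ j ∈ Finset.range n, c ^ j ≤ 17/16 := by
    have hc1 : c ≠ 1 := by intro h'; rw [h'] at h; norm_num at h
    rw [geom_sum_eq hc1]
    have hneg : c - 1 < 0 := by linarith
    rw [div_le_iff_of_neg hneg]
    have : (0:ℝ) ≤ c ^ n := pow_nonneg h0 n
    nlinarith
  calc ∑ j ∈ Finset.range n, c ^ (j+1) = c * ∑ j ∈ Finset.range n, c ^ j := by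
        rw [Finset.mul_sum]; exact Finset.sum_congr rfl fun j _ => by ring
    _ ≤ (1/17) * (17/16) := by
        apply mul_le_mul h hsum (Finset.sum_nonneg fun j _ => pow_nonneg h0 j) (by norm_num)
    _ = 1/16 := by norm_num

lemma iterate_fix_root {T : Type*} {par : T → T} {root : T} (hroot : par root = root)
    (hreach : ∀ w : T, ∃ m : ℕ, par^[m] w = root) {c : T} {m : ℕ} (hm : m ≠ 0)
    (h : par^[m] c = c) : c = root := by
  obtain ⟨M, hM⟩ := hreach c
  have hfix : ∀ t : ℕ, par^[m * t] c = c := by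
    intro t
    rw [Function.iterate_mul]
    exact Function.iterate_fixed h t
  have hMle : M ≤ m * M := Nat.le_mul_of_pos_left M (Nat.pos_of_ne_zero hm)
  have : par^[m * M] c = root := by
    rw [show m * M = (m * M - M) + M from (Nat.sub_add_cancel hMle).symm,
      Function.iterate_add_apply, hM]
    exact Function.iterate_fixed hroot _
  rw [hfix M] at this
  exact this

lemma leaf_anc {T : Type*} {par : T → T} {l z : T} (hl : ∀ u, u ≠ l → par u ≠ l)
    (h : ∃ m : ℕ, par^[m] z = l) : z = l := by
  classical
  set m := Nat.find h with hm
  have hspec : par^[m] z = l := Nat.find_spec h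
  rcases Nat.eq_zero_or_pos m with h0 | h0
  · rw [h0] at hspec; exact hspec
  · exfalso
    have hlt : m - 1 < m := Nat.sub_lt h0 one_pos
    have hne : par^[m-1] z ≠ l := Nat.find_min h hlt
    apply hl _ hne
    rw [← Function.iterate_succ_apply' par (m-1) z, Nat.succ_eq_add_one,
      Nat.sub_add_cancel h0]
    exact hspec

lemma chain_decay {T : Type*} {par : T → T} {root : T} {Δ : T → ℝ} {k : ℝ} (hk : 0 < k)
    (hΔdecay : ∀ w : T, w ≠ root → Δ w ≤ Δ (par w) / k) :
    ∀ (t : ℕ) (v : T), (∀ i, i < t → par^[i] v ≠ root) → Δ v ≤ Δ (par^[t] v) * (1/k) ^ t := by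
  intro t
  induction t with
  | zero => intro v _; simp
  | succ t ih =>
    intro v hv
    have hv0 : v ≠ root := by simpa using hv 0 (Nat.succ_pos t)
    have h1 : Δ v ≤ Δ (par v) / k := hΔdecay v hv0
    have h2 : Δ (par v) ≤ Δ (par^[t] (par v)) * (1/k) ^ t := by
      apply ih
      intro i hi
      have := hv (i+1) (Nat.succ_lt_succ hi)
      rwa [Function.iterate_succ_apply] at this
    calc Δ v ≤ Δ (par v) / k := h1
      _ ≤ (Δ (par^[t] (par v)) * (1/k) ^ t) / k := by
          exact div_le_div_of_nonneg_right h2 hk.le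
      _ = Δ (par^[t+1] v) * (1/k) ^ (t+1) := by
          rw [Function.iterate_succ_apply]; ring

lemma sum_range_pred {M : Type*} [AddCommMonoid M] (f : ℕ → M) {p : ℕ} (hp : 0 < p) :
    ∑ i ∈ Finset.range p, f i = f (p-1) + ∑ i ∈ Finset.range (p-1), f i := by
  obtain ⟨q, rfl⟩ := Nat.exists_eq_succ_of_ne_zero hp.ne'
  simp [Finset.sum_range_succ, add_comm]
open Metric Finset

lemma exists_points (X : Type*) [NormedAddCommGroup X] [NormedSpace ℝ X] (D : ℕ)
    (hdim : ((⌈Real.logb 2 (D:ℝ)⌉₊ : ℕ) : Cardinal) ≤ Module.rank ℝ X) :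
    ∃ S : Finset X, D ≤ S.card ∧ (∀ x ∈ S, ‖x‖ ≤ 1) ∧
      (∀ x ∈ S, ∀ y ∈ S, x ≠ y → 1/2 ≤ ‖x - y‖) := by
  classical
  set n : ℕ := ⌈Real.logb 2 (D:ℝ)⌉₊ with hn
  -- D ≤ 2 ^ n
  have hD2 : D ≤ 2 ^ n := by
    rcases Nat.eq_zero_or_pos D with h0 | h0
    · simp [h0]
    · have h1 : (D : ℝ) = 2 ^ Real.logb 2 (D : ℝ) :=
        (Real.rpow_logb (by norm_num) (by norm_num) (by exact_mod_cast h0)).symm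
      have h2 : Real.logb 2 (D:ℝ) ≤ (n : ℝ) := Nat.le_ceil _
      have h3 : (D : ℝ) ≤ (2:ℝ) ^ (n:ℝ) := by
        rw [h1]
        exact Real.rpow_le_rpow_of_exponent_le (by norm_num) h2
      rw [Real.rpow_natCast] at h3
      exact_mod_cast h3
  -- a subspace of dimension n
  obtain ⟨s, hscard, hsli⟩ := le_rank_iff_exists_linearIndependent_finset.1 hdim
  set E := Submodule.span ℝ (s : Set X) with hE
  haveI : FiniteDimensional ℝ E := FiniteDimensional.span_finset ℝ s
  have hfr : Module.finrank ℝ E = n := by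
    rw [hE, finrank_span_finset_eq_card hsli, hscard]
  letI : MeasurableSpace E := borel E
  haveI : BorelSpace E := ⟨rfl⟩
  obtain ⟨S', hScard, hSnorm, hSsep⟩ := exists_packing E
  refine ⟨S'.map ⟨Subtype.val, Subtype.val_injective⟩, ?_, ?_, ?_⟩
  · rw [Finset.card_map]
    calc D ≤ 2 ^ n := hD2
      _ = 2 ^ Module.finrank ℝ E := by rw [hfr]
      _ ≤ S'.card := hScard
  · intro x hx
    obtain ⟨z, hz, rfl⟩ := Finset.mem_map.1 hx
    exact hSnorm z hz
  · intro x hx y hy hxy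
    obtain ⟨zx, hzx, rfl⟩ := Finset.mem_map.1 hx
    obtain ⟨zy, hzy, rfl⟩ := Finset.mem_map.1 hy
    have : zx ≠ zy := fun h => hxy (by rw [h])
    have := hSsep zx hzx zy hzy this
    simpa using this

end Helpers

universe u v

/-- Every finite `k`-HST with `k > 17` admits an embedding with distortion
at most `16k/(k-17)` into every real Banach space `X` with `dim X ≥ log₂ D`, where `D` is
the maximal out-degree of a vertex of the rooted tree defining the `k`-HST.  The `k`-HST is
given by a finite rooted tree `(T, root, par)` with labels `Δ`, and its points are the
leaves of `T`, with `d x y = Δ (lca x y)` for distinct leaves `x, y`. -/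
theorem statement6 (k : ℝ) (hk : 17 < k)
    (T : Type v) [Fintype T] (root : T) (par : T → T) (Δ : T → ℝ)
    (hroot : par root = root)
    (hreach : ∀ w : T, ∃ m : ℕ, par^[m] w = root)
    (hΔnonneg : ∀ w : T, 0 ≤ Δ w)
    (hΔzero : ∀ w : T, Δ w = 0 ↔ IsLeaf par w)
    (hΔdecay : ∀ w : T, w ≠ root → Δ w ≤ Δ (par w) / k)
    (d : { w : T // IsLeaf par w } → { w : T // IsLeaf par w } → ℝ)
    (hd_self : ∀ x, d x x = 0)
    (hd_lca : ∀ x y, x ≠ y → ∃ w : T, IsLCA par w x.1 y.1 ∧ d x y = Δ w)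
    (X : Type u) [NormedAddCommGroup X] [NormedSpace ℝ X] [CompleteSpace X]
    (hdim : (⌈Real.logb 2 ((maxOutDegree par : ℝ))⌉₊ : Cardinal) ≤ Module.rank ℝ X) :
    embedsM (16 * k / (k - 17)) d (fun a b : X => ‖a - b‖) := by
  classical
  have hk0 : (0:ℝ) < k := by linarith
  obtain ⟨S, hScard, hSnorm, hSsep⟩ := exists_points X (maxOutDegree par) hdim
  -- choose points for children of each vertex
  have hchild : ∀ v : T, ∃ g : T → X, (∀ u, u ≠ v → par u = v → g u ∈ S) ∧
      (∀ u u', u ≠ v → par u = v → u' ≠ v → par u' = v → u ≠ u' → g u ≠ g u') := by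
    intro v
    have hcard : Fintype.card {u : T // u ≠ v ∧ par u = v} ≤ Fintype.card {x // x ∈ S} := by
      rw [Fintype.card_coe]
      refine le_trans ?_ hScard
      have h := Finset.le_sup (f := fun v => Nat.card {u : T // u ≠ v ∧ par u = v})
        (Finset.mem_univ v)
      simpa [maxOutDegree, Nat.card_eq_fintype_card] using h
    obtain ⟨e⟩ := Function.Embedding.nonempty_of_card_le hcard
    refine ⟨fun u => if h : u ≠ v ∧ par u = v then (e ⟨u, h⟩ : X) else 0, ?_, ?_⟩
    · intro u h1 h2; beta_reduce; rw [dif_pos (⟨h1, h2⟩ : u ≠ v ∧ par u = v)]; exact (e ⟨u, ⟨h1, h2⟩⟩).2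
    · intro u u' h1 h2 h1' h2' hne
      beta_reduce
      rw [dif_pos (⟨h1, h2⟩ : u ≠ v ∧ par u = v), dif_pos (⟨h1', h2'⟩ : u' ≠ v ∧ par u' = v)]
      intro hval
      have h3 : (⟨u, ⟨h1, h2⟩⟩ : {u : T // u ≠ v ∧ par u = v}) = ⟨u', ⟨h1', h2'⟩⟩ :=
        e.injective (Subtype.coe_injective hval)
      exact hne (congrArg Subtype.val h3)
  choose g hg1 hg2 using hchild
  have hnotfix : ∀ u : T, u ≠ root → u ≠ par u := by
    intro u hu h
    exact hu (iterate_fix_root hroot hreach one_ne_zero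
      (by rw [Function.iterate_one]; exact h.symm))
  set P : T → X := fun u => g (par u) u with hPdef
  have hP1 : ∀ u : T, u ≠ root → ‖P u‖ ≤ 1 := by
    intro u hu
    exact hSnorm _ (hg1 (par u) u (hnotfix u hu) rfl)
  have hP2 : ∀ u u' : T, u ≠ root → u' ≠ root → par u = par u' → u ≠ u' →
      1/2 ≤ ‖P u - P u'‖ := by
    intro u u' hu hu' hpar hne
    have hm1 : g (par u) u ∈ S := hg1 (par u) u (hnotfix u hu) rfl
    have hgu' : P u' = g (par u) u' := by simp only [hPdef]; rw [hpar]
    have hm2 : g (par u) u' ∈ S :=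
      hg1 (par u) u' (fun h => hnotfix u' hu' (h.trans hpar)) hpar.symm
    have hneq : g (par u) u ≠ g (par u) u' :=
      hg2 (par u) u u' (hnotfix u hu) rfl (fun h => hnotfix u' hu' (h.trans hpar)) hpar.symm hne
    have hPu : P u = g (par u) u := rfl
    rw [hPu, hgu']
    exact hSsep _ hm1 _ hm2 hneq
  -- depth function
  set m : T → ℕ := fun v => Nat.find (hreach v) with hm
  have hmspec : ∀ v, par^[m v] v = root := fun v => Nat.find_spec (hreach v)
  have hmmin : ∀ v i, i < m v → par^[i] v ≠ root := fun v i hi => Nat.find_min (hreach v) hi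
  -- the embedding on all of T
  set F : T → X := fun z => ∑ i ∈ Finset.range (m z), Δ (par^[i+1] z) • P (par^[i] z) with hF
  have hk17 : (0:ℝ) ≤ 1/k ∧ 1/k ≤ 1/17 := by
    constructor
    · positivity
    · rw [div_le_div_iff₀ hk0 (by norm_num)]; linarith
  -- decomposition of F z along the path to an ancestor w
  have side : ∀ (w z : T), (∃ mm : ℕ, par^[mm] z = w) → z ≠ w →
      ∃ (a : T) (R : X), F z = Δ w • P a + R + F w ∧ par a = w ∧ a ≠ w ∧
        (∃ t : ℕ, par^[t] z = a) ∧ ‖R‖ ≤ Δ w / 16 := by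
    intro w z hzanc hzw
    have hpspec : par^[Nat.find hzanc] z = w := Nat.find_spec hzanc
    set p : ℕ := Nat.find hzanc with hpdef
    have hpmin : ∀ i, i < p → par^[i] z ≠ w := fun i hi => Nat.find_min hzanc hi
    have hp0 : 0 < p := by
      rcases Nat.eq_zero_or_pos p with h | h
      · exfalso; apply hzw; rw [← hpspec, h]; rfl
      · exact h
    have hnr : ∀ i, i < p → par^[i] z ≠ root := by
      intro i hi hieq
      have h1 : w = root := by
        rw [← hpspec, show p = (p - i) + i from (Nat.sub_add_cancel hi.le).symm,
          Function.iterate_add_apply, hieq, Function.iterate_fixed hroot]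
      exact hpmin i hi (hieq.trans h1.symm)
    have hpm : p ≤ m z := by
      by_contra h
      push_neg at h
      exact hnr (m z) h (hmspec z)
    have hmz : m z = p + m w := by
      have h1 : par^[m w + p] z = root := by
        rw [Function.iterate_add_apply, hpspec]; exact hmspec w
      have h2 : m z ≤ m w + p := Nat.find_le h1
      have h3 : par^[m z - p] w = root := by
        rw [← hpspec, ← Function.iterate_add_apply, Nat.sub_add_cancel hpm]
        exact hmspec z
      have h4 : m w ≤ m z - p := Nat.find_le h3
      omega
    refine ⟨par^[p-1] z, ∑ i ∈ Finset.range (p-1), Δ (par^[i+1] z) • P (par^[i] z),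
      ?_, ?_, hpmin (p-1) (by omega), ⟨p-1, rfl⟩, ?_⟩
    · -- decomposition
      have e2 : ∑ i ∈ Finset.Ico p (m z), Δ (par^[i+1] z) • P (par^[i] z) = F w := by
        rw [Finset.sum_Ico_eq_sum_range, show m z - p = m w by omega]
        simp only [hF]
        refine Finset.sum_congr rfl fun j _ => ?_
        have ea : par^[j+1] w = par^[p + j + 1] z := by
          rw [← hpspec, ← Function.iterate_add_apply, show j + 1 + p = p + j + 1 by omega]
        have eb : par^[j] w = par^[p + j] z := by
          rw [← hpspec, ← Function.iterate_add_apply, show j + p = p + j by omega]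
        rw [ea, eb]
      have e3 : ∑ i ∈ Finset.range p, Δ (par^[i+1] z) • P (par^[i] z)
          = Δ w • P (par^[p-1] z) + ∑ i ∈ Finset.range (p-1), Δ (par^[i+1] z) • P (par^[i] z) := by
        rw [sum_range_pred (fun i => Δ (par^[i+1] z) • P (par^[i] z)) hp0,
          show p - 1 + 1 = p by omega, hpspec]
      calc F z = ∑ i ∈ Finset.range (m z), Δ (par^[i+1] z) • P (par^[i] z) := by
            simp only [hF]
        _ = ∑ i ∈ Finset.range p, Δ (par^[i+1] z) • P (par^[i] z)
            + ∑ i ∈ Finset.Ico p (m z), Δ (par^[i+1] z) • P (par^[i] z) := by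
            rw [Finset.range_eq_Ico, ← Finset.sum_Ico_consecutive _ (Nat.zero_le p) hpm,
              ← Finset.range_eq_Ico]
        _ = Δ w • P (par^[p-1] z) + ∑ i ∈ Finset.range (p-1), Δ (par^[i+1] z) • P (par^[i] z)
            + F w := by rw [e2, e3]
    · -- par a = w
      rw [← Function.iterate_succ_apply' par (p-1) z, show (p - 1).succ = p by omega]
      exact hpspec
    · -- norm bound
      have hterm : ∀ i ∈ Finset.range (p-1),
          ‖Δ (par^[i+1] z) • P (par^[i] z)‖ ≤ Δ w * (1/k)^(p-1-i) := by
        intro i hi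
        rw [Finset.mem_range] at hi
        have hd' : Δ (par^[i+1] z) ≤ Δ (par^[p-1-i] (par^[i+1] z)) * (1/k)^(p-1-i) := by
          apply chain_decay hk0 hΔdecay
          intro s hs
          rw [← Function.iterate_add_apply]
          exact hnr _ (by omega)
        have he : par^[p-1-i] (par^[i+1] z) = w := by
          rw [← Function.iterate_add_apply, show p - 1 - i + (i+1) = p by omega]
          exact hpspec
        rw [he] at hd'
        have hPn : ‖P (par^[i] z)‖ ≤ 1 := hP1 _ (hnr i (by omega))
        rw [norm_smul, Real.norm_eq_abs, abs_of_nonneg (hΔnonneg _)]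
        calc Δ (par^[i+1] z) * ‖P (par^[i] z)‖ ≤ Δ (par^[i+1] z) * 1 :=
              mul_le_mul_of_nonneg_left hPn (hΔnonneg _)
          _ = Δ (par^[i+1] z) := mul_one _
          _ ≤ Δ w * (1/k)^(p-1-i) := hd'
      calc ‖∑ i ∈ Finset.range (p-1), Δ (par^[i+1] z) • P (par^[i] z)‖
          ≤ ∑ i ∈ Finset.range (p-1), ‖Δ (par^[i+1] z) • P (par^[i] z)‖ := norm_sum_le _ _
        _ ≤ ∑ i ∈ Finset.range (p-1), Δ w * (1/k)^(p-1-i) := Finset.sum_le_sum hterm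
        _ = Δ w * ∑ i ∈ Finset.range (p-1), (1/k)^(p-1-i) := by rw [Finset.mul_sum]
        _ = Δ w * ∑ j ∈ Finset.range (p-1), (1/k)^(j+1) := by
            congr 1
            rw [← Finset.sum_range_reflect (fun j => (1/k)^(j+1)) (p-1)]
            refine Finset.sum_congr rfl fun j hj => ?_
            rw [Finset.mem_range] at hj
            congr 1
            omega
        _ ≤ Δ w * (1/16) := mul_le_mul_of_nonneg_left (geom_tail hk17.1 hk17.2 _) (hΔnonneg w)
        _ = Δ w / 16 := by ring
  -- the key two-sided estimate
  have key : ∀ (x y : {w : T // IsLeaf par w}), x ≠ y → ∀ w, IsLCA par w x.1 y.1 →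
      0 < Δ w ∧ 3/8 * Δ w ≤ ‖F x.1 - F y.1‖ ∧ ‖F x.1 - F y.1‖ ≤ 17/8 * Δ w := by
    intro x y hxy w hw
    obtain ⟨hax, hay, hmin⟩ := hw
    have hwx : x.1 ≠ w := by
      intro h
      obtain ⟨mm, hmm⟩ := hay
      have h1 : y.1 = x.1 := leaf_anc x.2 ⟨mm, by rw [hmm, h]⟩
      exact hxy (Subtype.ext h1.symm)
    have hwy : y.1 ≠ w := by
      intro h
      obtain ⟨mm, hmm⟩ := hax
      have h1 : x.1 = y.1 := leaf_anc y.2 ⟨mm, by rw [hmm, h]⟩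
      exact hxy (Subtype.ext h1)
    obtain ⟨a, Rx, hFx, hparA, haw, hancA, hRx⟩ := side w x.1 hax hwx
    obtain ⟨b, Ry, hFy, hparB, hbw, hancB, hRy⟩ := side w y.1 hay hwy
    have hab : a ≠ b := by
      intro h
      obtain ⟨t, ht⟩ := hmin a hancA (h ▸ hancB)
      have hcyc : par^[t+1] a = a := by
        rw [Function.iterate_succ_apply, hparA, ht]
      have ha_root : a = root := iterate_fix_root hroot hreach (Nat.succ_ne_zero t) hcyc
      apply haw
      rw [ha_root, ← hparA, ha_root, hroot]
    have haroot : a ≠ root := by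
      intro h; apply haw; rw [h, ← hparA, h, hroot]
    have hbroot : b ≠ root := by
      intro h; apply hbw; rw [h, ← hparB, h, hroot]
    have hΔw : 0 < Δ w := by
      rcases (hΔnonneg w).lt_or_eq with h | h
      · exact h
      · exact absurd hparA ((hΔzero w).1 h.symm a haw)
    have hsep2 : 1/2 ≤ ‖P a - P b‖ := hP2 a b haroot hbroot (hparA.trans hparB.symm) hab
    have hPa : ‖P a‖ ≤ 1 := hP1 a haroot
    have hPb : ‖P b‖ ≤ 1 := hP1 b hbroot
    have hupper2 : ‖P a - P b‖ ≤ 2 := by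
      calc ‖P a - P b‖ ≤ ‖P a‖ + ‖P b‖ := norm_sub_le _ _
        _ ≤ 2 := by linarith
    have hdiff : F x.1 - F y.1 = Δ w • (P a - P b) + (Rx - Ry) := by
      rw [hFx, hFy, smul_sub]; abel
    have hRxy : ‖Rx - Ry‖ ≤ Δ w / 8 := by
      calc ‖Rx - Ry‖ ≤ ‖Rx‖ + ‖Ry‖ := norm_sub_le _ _
        _ ≤ Δ w / 16 + Δ w / 16 := add_le_add hRx hRy
        _ = Δ w / 8 := by ring
    have hMn : ‖Δ w • (P a - P b)‖ = Δ w * ‖P a - P b‖ := by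
      rw [norm_smul, Real.norm_eq_abs, abs_of_pos hΔw]
    have hMeq : Δ w • (P a - P b) = (F x.1 - F y.1) - (Rx - Ry) := by
      rw [hdiff]; abel
    have hlow1 : ‖Δ w • (P a - P b)‖ ≤ ‖F x.1 - F y.1‖ + ‖Rx - Ry‖ := by
      rw [hMeq]; exact norm_sub_le _ _
    have hhigh1 : ‖F x.1 - F y.1‖ ≤ ‖Δ w • (P a - P b)‖ + ‖Rx - Ry‖ := by
      rw [hdiff]; exact norm_add_le _ _
    have l1 : Δ w * (1/2) ≤ Δ w * ‖P a - P b‖ := mul_le_mul_of_nonneg_left hsep2 hΔw.le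
    have l2 : Δ w * ‖P a - P b‖ ≤ Δ w * 2 := mul_le_mul_of_nonneg_left hupper2 hΔw.le
    exact ⟨hΔw, by linarith, by linarith⟩
  -- assemble
  refine ⟨fun x => F x.1, ?_, 3/8, by norm_num, ?_⟩
  · intro a b hab
    by_contra hne
    obtain ⟨w, hw, _⟩ := hd_lca a b hne
    obtain ⟨hΔw, hlow, _⟩ := key a b hne w hw
    have hab' : F a.1 = F b.1 := hab
    rw [hab', sub_self, norm_zero] at hlow
    linarith
  · intro a b
    by_cases hab : a = b
    · subst hab
      simp only [hd_self a, sub_self, norm_zero, mul_zero]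
      norm_num
    · obtain ⟨w, hw, hdab⟩ := hd_lca a b hab
      obtain ⟨hΔw, hlow, hhigh⟩ := key a b hab w hw
      simp only [hdab]
      refine ⟨by linarith, ?_⟩
      have hden : 0 < k - 17 := by linarith
      have hcoef : 17/8 ≤ 6 * k / (k - 17) := by
        rw [le_div_iff₀ hden]; nlinarith
      have hq : 16 * k / (k - 17) * (3/8 * Δ w) = (6 * k / (k - 17)) * Δ w := by ring
      calc ‖F a.1 - F b.1‖ ≤ 17/8 * Δ w := hhigh
        _ ≤ (6 * k / (k - 17)) * Δ w := mul_le_mul_of_nonneg_right hcoef hΔw.le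
        _ = 16 * k / (k - 17) * (3/8 * Δ w) := hq.symm


end Stmt
end
end

section
/- There exists a universal constant K ≥ 1 such that every finite ultrametric space with n points admits a K-embedding into every real Banach space X with dim X ≥ log₂ n. -/
noncomputable section

namespace Stmt

universe u v

open Metric MeasureTheory Module
open scoped ENNReal

/-- Volume packing: any finite-dimensional real normed space of dimension `d` contains `2 ^ d`
points of norm at most `2` that are pairwise `1`-separated. -/
lemma packingX {X : Type*} [NormedAddCommGroup X] [NormedSpace ℝ X] [FiniteDimensional ℝ X] :
    ∃ T : Finset X, 2 ^ (finrank ℝ X) ≤ T.card ∧ (∀ x ∈ T, ‖x‖ ≤ 2) ∧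
      ∀ x ∈ T, ∀ y ∈ T, x ≠ y → 1 ≤ ‖x - y‖ := by
  classical
  rcases subsingleton_or_nontrivial X with hX | hX
  · refine ⟨{0}, ?_, ?_, ?_⟩
    · have h0 : finrank ℝ X = 0 := by
        simp [Module.finrank, rank_subsingleton' ℝ X]
      simp [h0]
    · intro x hx; simp only [Finset.mem_singleton] at hx; simp [hx]
    · intro x hx y hy hxy
      simp only [Finset.mem_singleton] at hx hy; exact absurd (hx.trans hy.symm) hxy
  · -- nontrivial case: volume packing argument
    letI : MeasurableSpace X := borel X
    haveI : BorelSpace X := ⟨rfl⟩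
    set d := finrank ℝ X with hd
    obtain ⟨e⟩ : Nonempty ((Fin d → ℝ) ≃L[ℝ] X) := by
      refine ⟨ContinuousLinearEquiv.ofFinrankEq ?_⟩
      simp [hd]
    set μ : Measure X := Measure.map e volume with hμ
    haveI : μ.IsAddHaarMeasure := e.isAddHaarMeasure_map volume
    -- separated finsets of the ball of radius 2
    set P : Finset X → Prop := fun T =>
      (∀ x ∈ T, ‖x‖ ≤ 2) ∧ ∀ x ∈ T, ∀ y ∈ T, x ≠ y → 1 ≤ ‖x - y‖ with hP
    -- cardinality of separated finsets is bounded
    obtain ⟨t, -, htfin, htcov⟩ :=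
      finite_cover_balls_of_compact (isCompact_closedBall (0 : X) 2) (e := 1/2) (by norm_num)
    have hbound : ∀ T : Finset X, P T → T.card ≤ htfin.toFinset.card := by
      intro T hT
      have : ∀ x ∈ T, ∃ c ∈ htfin.toFinset, x ∈ ball c (1/2) := by
        intro x hx
        have : x ∈ ⋃ c ∈ t, ball c (1/2) := htcov (by
          simpa [mem_closedBall, dist_eq_norm] using hT.1 x hx)
        simpa [Set.mem_iUnion, Set.Finite.mem_toFinset] using this
      choose c hc hcball using this
      have hinj : ∀ (x) (hx : x ∈ T) (y) (hy : y ∈ T), c x hx = c y hy → x = y := by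
        intro x hx y hy hcxy
        by_contra hxy
        have h1 := hT.2 x hx y hy hxy
        have h2 : dist x (c x hx) < 1/2 := hcball x hx
        have h3 : dist y (c y hy) < 1/2 := hcball y hy
        rw [← hcxy] at h3
        have : dist x y < 1 := by
          calc dist x y ≤ dist x (c x hx) + dist (c x hx) y := dist_triangle _ _ _
            _ = dist x (c x hx) + dist y (c x hx) := by rw [dist_comm (c x hx) y]
            _ < 1 := by linarith
        rw [dist_eq_norm] at this; linarith
      calc T.card = (T.attach.image fun x => c x.1 x.2).card := by
            rw [Finset.card_image_of_injective _ ?_, Finset.card_attach]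
            intro a b hab
            exact Subtype.ext (hinj a.1 a.2 b.1 b.2 hab)
        _ ≤ htfin.toFinset.card := by
            apply Finset.card_le_card
            intro z hz
            simp only [Finset.mem_image, Finset.mem_attach] at hz
            obtain ⟨a, -, rfl⟩ := hz
            exact hc a.1 a.2
    -- choose a separated set of maximal cardinality
    set S : Set ℕ := {k | ∃ T : Finset X, P T ∧ T.card = k} with hS
    have hSne : S.Nonempty := ⟨0, ∅, ⟨by simp, by simp⟩, by simp⟩
    have hSbdd : BddAbove S := ⟨htfin.toFinset.card, fun k hk => by
      obtain ⟨T, hT, rfl⟩ := hk; exact hbound T hT⟩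
    obtain ⟨T, hT, hTcard⟩ : ∃ T, P T ∧ T.card = sSup S := Nat.sSup_mem hSne hSbdd
    refine ⟨T, ?_, hT.1, hT.2⟩
    -- maximality gives the covering property
    have hcov : closedBall (0:X) 2 ⊆ ⋃ y ∈ T, ball y 1 := by
      intro x hx
      by_contra hxc
      simp only [Set.mem_iUnion, mem_ball, not_exists, not_and, not_lt, exists_prop] at hxc
      have hfar : ∀ y ∈ T, 1 ≤ ‖x - y‖ := by
        intro y hy
        have := hxc y hy
        rwa [dist_eq_norm] at this
      have hxT : x ∉ T := fun h => by
        have := hfar x h; simp at this; linarith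
      have hPT : P (insert x T) := by
        constructor
        · intro z hz
          rcases Finset.mem_insert.mp hz with rfl | hz
          · simpa [dist_eq_norm] using mem_closedBall.mp hx
          · exact hT.1 z hz
        · intro a ha b hb hab
          rcases Finset.mem_insert.mp ha with ha' | ha' <;>
            rcases Finset.mem_insert.mp hb with hb' | hb'
          · exact absurd (ha'.trans hb'.symm) hab
          · subst ha'; exact hfar b hb'
          · subst hb'; rw [norm_sub_rev]; exact hfar a ha'
          · exact hT.2 a ha' b hb' hab
      have hmem : T.card + 1 ∈ S := ⟨insert x T, hPT, by
        rw [Finset.card_insert_of_notMem hxT]⟩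
      have := le_csSup hSbdd hmem
      omega
    -- measure estimate
    have h1 : μ (closedBall (0:X) 2) ≤ (T.card : ℝ≥0∞) * μ (ball (0:X) 1) := by
      calc μ (closedBall 0 2) ≤ μ (⋃ y ∈ T, ball y 1) := measure_mono hcov
        _ ≤ ∑ y ∈ T, μ (ball y 1) := measure_biUnion_finset_le _ _
        _ = ∑ _y ∈ T, μ (ball (0:X) 1) := by
            refine Finset.sum_congr rfl fun y _ => ?_
            exact Measure.addHaar_ball_center μ y 1
        _ = (T.card : ℝ≥0∞) * μ (ball (0:X) 1) := by
            simp [Finset.sum_const, nsmul_eq_mul]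
    have h2 : μ (closedBall (0:X) 2) = ENNReal.ofReal ((2:ℝ)^d) * μ (ball (0:X) 1) :=
      Measure.addHaar_closedBall μ 0 (by norm_num)
    have hpos : 0 < μ (ball (0:X) 1) := measure_ball_pos μ 0 one_pos
    have hfin : μ (ball (0:X) 1) < ⊤ :=
      lt_of_le_of_lt (measure_mono ball_subset_closedBall) measure_closedBall_lt_top
    rw [h2] at h1
    have h3 : ENNReal.ofReal ((2:ℝ)^d) ≤ (T.card : ℝ≥0∞) :=
      (ENNReal.mul_le_mul_iff_left hpos.ne' hfin.ne).mp h1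
    have h4 : ENNReal.ofReal ((2:ℝ)^d) = ((2^d : ℕ) : ℝ≥0∞) := by
      rw [← ENNReal.ofReal_natCast (2^d)]
      norm_num
    rw [h4] at h3
    exact_mod_cast h3

/-- A separated family indexed by `Fin n` in a space of rank at least `k`, `n ≤ 2 ^ k`. -/
lemma sepX {X : Type*} [NormedAddCommGroup X] [NormedSpace ℝ X] {k n : ℕ}
    (hn : n ≤ 2 ^ k) (hrank : (k : Cardinal) ≤ Module.rank ℝ X) :
    ∃ s : Fin n → X, (∀ a, ‖s a‖ ≤ 2) ∧ ∀ a b, a ≠ b → 1 ≤ ‖s a - s b‖ := by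
  classical
  by_cases hfd : FiniteDimensional ℝ X
  · have hk : k ≤ finrank ℝ X := by
      have h := Module.finrank_eq_rank ℝ X
      rw [← h] at hrank
      exact_mod_cast hrank
    obtain ⟨T, hTcard, hTnorm, hTsep⟩ := packingX (X := X)
    have hcard : n ≤ T.card :=
      le_trans (hn.trans (Nat.pow_le_pow_right (by norm_num) hk)) hTcard
    have hcard' : Fintype.card (Fin n) ≤ Fintype.card T := by
      simpa [Fintype.card_coe] using hcard
    obtain ⟨emb⟩ := Function.Embedding.nonempty_of_card_le hcard'
    refine ⟨fun i => (emb i : X), fun a => hTnorm _ (emb a).2,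
      fun a b hab => hTsep _ (emb a).2 _ (emb b).2 ?_⟩
    exact fun h => hab (emb.injective (Subtype.ext h))
  · obtain ⟨f, hf1, hf2⟩ := exists_seq_norm_le_one_le_norm_sub' (𝕜 := ℝ) (E := X)
      (c := (3/2 : ℝ)) (by norm_num [Real.norm_eq_abs]) (R := 2)
      (by norm_num [Real.norm_eq_abs]) hfd
    exact ⟨fun i => f i, fun a => hf1 _,
      fun a b hab => hf2 (fun h => hab (Fin.val_injective h))⟩

/-- Geometric sum over a finite set of integers, all at most `m - 2`. -/
lemma geomZ (F : Finset ℤ) (m : ℤ) (hF : ∀ j ∈ F, j ≤ m - 2) :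
    ∑ j ∈ F, (16:ℝ)^j ≤ 16^(m-1) / 15 := by
  classical
  have h16 : (0:ℝ) < 16 := by norm_num
  set g : ℤ → ℕ := fun j => (m - 2 - j).toNat with hg
  have hginv : ∀ j ∈ F, (m - 2 : ℤ) - g j = j := by
    intro j hj
    have := hF j hj
    simp only [hg]
    omega
  have hsum : ∑ j ∈ F, (16:ℝ)^j = ∑ i ∈ F.image g, (16:ℝ)^((m-2:ℤ) - (i:ℤ)) := by
    rw [Finset.sum_image]
    · exact Finset.sum_congr rfl fun j hj => by rw [hginv j hj]
    · intro a ha b hb hab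
      have h1 := hginv a ha
      have h2 := hginv b hb
      rw [hab] at h1
      omega
  rw [hsum]
  obtain ⟨N, hN⟩ : ∃ N : ℕ, F.image g ⊆ Finset.range N := by
    rcases (F.image g).eq_empty_or_nonempty with he | hne
    · exact ⟨0, by simp [he]⟩
    · exact ⟨(F.image g).max' hne + 1, fun i hi =>
        Finset.mem_range.mpr (Nat.lt_succ_of_le (Finset.le_max' _ _ hi))⟩
  have hle : ∑ i ∈ F.image g, (16:ℝ)^((m-2:ℤ) - (i:ℤ)) ≤
      ∑ i ∈ Finset.range N, (16:ℝ)^((m-2:ℤ) - (i:ℤ)) := by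
    apply Finset.sum_le_sum_of_subset_of_nonneg hN
    intro i _ _
    positivity
  refine hle.trans ?_
  have hterm : ∀ i : ℕ, (16:ℝ)^((m-2:ℤ) - (i:ℤ)) = (16:ℝ)^(m-2) * (1/16:ℝ)^i := by
    intro i
    rw [zpow_sub₀ (by norm_num : (16:ℝ) ≠ 0), zpow_natCast]
    rw [div_pow, one_pow]
    field_simp
  simp only [hterm]
  rw [← Finset.mul_sum]
  have hgeom : ∑ i ∈ Finset.range N, (1/16:ℝ)^i ≤ 16/15 := by
    rw [geom_sum_eq (by norm_num : (1/16:ℝ) ≠ 1)]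
    have : (0:ℝ) ≤ (1/16:ℝ)^N := by positivity
    have h2 : ((1/16:ℝ)^N - 1) / (1/16 - 1) = (1 - (1/16:ℝ)^N) * (16/15) := by
      field_simp
      ring
    rw [h2]
    nlinarith
  have h3 : (0:ℝ) < (16:ℝ)^(m-2) := zpow_pos h16 _
  calc (16:ℝ)^(m-2) * ∑ i ∈ Finset.range N, (1/16:ℝ)^i
      ≤ (16:ℝ)^(m-2) * (16/15) := by nlinarith
    _ = 16^(m-1) / 15 := by
        rw [show m - 1 = (m-2) + 1 by ring, zpow_add₀ (by norm_num : (16:ℝ) ≠ 0)]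
        ring

set_option maxHeartbeats 1000000 in
/-- There is a universal constant `K ≥ 1` such that every finite ultrametric
space with `n` points admits a `K`-embedding into every real Banach space `X` with
`dim X ≥ log₂ n`. -/
theorem statement7 :
    ∃ K : ℝ, 1 ≤ K ∧
      ∀ (M : Type v) [MetricSpace M] [Fintype M],
        (∀ x y z : M, dist x z ≤ max (dist x y) (dist y z)) →
        ∀ (X : Type u) [NormedAddCommGroup X] [NormedSpace ℝ X] [CompleteSpace X],
          (⌈Real.logb 2 ((Fintype.card M : ℝ))⌉₊ : Cardinal) ≤ Module.rank ℝ X →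
          embedsM K (fun a b : M => dist a b) (fun a b : X => ‖a - b‖) := by
  classical
  refine ⟨94, by norm_num, ?_⟩
  intro M _ _ hU X _ _ _ hrank
  rcases subsingleton_or_nontrivial M with hM | hM
  · -- trivial case
    refine ⟨fun _ => 0, fun a b _ => Subsingleton.elim a b, 1, one_pos, ?_⟩
    intro a b
    have : a = b := Subsingleton.elim a b
    subst this
    simp
  · -- main case
    set n := Fintype.card M with hn
    have hn1 : 1 ≤ n := Fintype.card_pos
    -- the separated family
    have hn2k : n ≤ 2 ^ ⌈Real.logb 2 (n : ℝ)⌉₊ := by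
      have hnpos : (0:ℝ) < n := by exact_mod_cast hn1
      have h1 : (n:ℝ) = (2:ℝ) ^ Real.logb 2 (n:ℝ) :=
        (Real.rpow_logb (by norm_num) (by norm_num) hnpos).symm
      have h2 : (n:ℝ) ≤ (2:ℝ) ^ ((⌈Real.logb 2 (n:ℝ)⌉₊ : ℕ) : ℝ) := by
        conv_lhs => rw [h1]
        exact Real.rpow_le_rpow_of_exponent_le (by norm_num) (Nat.le_ceil _)
      rw [Real.rpow_natCast] at h2
      exact_mod_cast h2
    obtain ⟨s0, hs0norm, hs0sep⟩ := sepX (X := X) hn2k hrank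
    set s : M → X := fun z => s0 (Fintype.equivFin M z) with hs
    have hsnorm : ∀ a, ‖s a‖ ≤ 2 := fun a => hs0norm _
    have hssep : ∀ a b : M, a ≠ b → 1 ≤ ‖s a - s b‖ := fun a b hab =>
      hs0sep _ _ fun h => hab ((Fintype.equivFin M).injective h)
    -- scales
    set e : M → M → ℤ := fun a b => ⌈Real.logb 16 (dist a b)⌉ with he
    have key1 : ∀ a b : M, a ≠ b → dist a b ≤ (16:ℝ)^(e a b) := by
      intro a b hab
      have hd : 0 < dist a b := dist_pos.mpr hab
      calc dist a b = (16:ℝ) ^ Real.logb 16 (dist a b) :=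
            (Real.rpow_logb (by norm_num) (by norm_num) hd).symm
        _ ≤ (16:ℝ) ^ ((e a b : ℤ) : ℝ) :=
            Real.rpow_le_rpow_of_exponent_le (by norm_num) (Int.le_ceil _)
        _ = (16:ℝ) ^ (e a b) := Real.rpow_intCast 16 _
    have key2 : ∀ a b : M, a ≠ b → (16:ℝ)^(e a b - 1) < dist a b := by
      intro a b hab
      have hd : 0 < dist a b := dist_pos.mpr hab
      have h1 : ((e a b - 1 : ℤ) : ℝ) < Real.logb 16 (dist a b) := by
        apply Int.lt_ceil.mp
        simp only [he]
        omega
      calc (16:ℝ)^(e a b - 1) = (16:ℝ) ^ ((e a b - 1 : ℤ) : ℝ) :=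
            (Real.rpow_intCast _ _).symm
        _ < (16:ℝ) ^ Real.logb 16 (dist a b) :=
            Real.rpow_lt_rpow_of_exponent_lt (by norm_num) h1
        _ = dist a b := Real.rpow_logb (by norm_num) (by norm_num) hd
    -- representatives of clusters
    letI : LinearOrder M := LinearOrder.lift' (Fintype.equivFin M) (Equiv.injective _)
    have hQne : ∀ (j : ℤ) (x : M),
        x ∈ Finset.univ.filter (fun z : M => dist x z ≤ (16:ℝ)^j) := by
      intro j x
      simp only [Finset.mem_filter, Finset.mem_univ, true_and, dist_self]
      exact le_of_lt (zpow_pos (by norm_num) j)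
    set rep : ℤ → M → M := fun j x =>
      (Finset.univ.filter (fun z : M => dist x z ≤ (16:ℝ)^j)).min' ⟨x, hQne j x⟩ with hrep
    have hrepMem : ∀ (j : ℤ) (x : M), dist x (rep j x) ≤ (16:ℝ)^j := by
      intro j x
      have := Finset.min'_mem
        (Finset.univ.filter (fun z : M => dist x z ≤ (16:ℝ)^j)) ⟨x, hQne j x⟩
      simpa only [Finset.mem_filter, Finset.mem_univ, true_and, hrep] using this
    have hsetEq : ∀ (j : ℤ) (x y : M), dist x y ≤ (16:ℝ)^j →
        Finset.univ.filter (fun z : M => dist x z ≤ (16:ℝ)^j)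
          = Finset.univ.filter (fun z : M => dist y z ≤ (16:ℝ)^j) := by
      intro j x y hxy
      ext z
      simp only [Finset.mem_filter, Finset.mem_univ, true_and]
      constructor
      · intro h
        calc dist y z ≤ max (dist y x) (dist x z) := hU y x z
          _ ≤ (16:ℝ)^j := max_le (by rwa [dist_comm]) h
      · intro h
        calc dist x z ≤ max (dist x y) (dist y z) := hU x y z
          _ ≤ (16:ℝ)^j := max_le hxy h
    have hrepEq : ∀ (j : ℤ) (x y : M), dist x y ≤ (16:ℝ)^j → rep j x = rep j y := by
      intro j x y hxy
      have hset := hsetEq j x y hxy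
      apply le_antisymm
      · apply Finset.min'_le
        rw [hset]
        exact Finset.min'_mem _ _
      · apply Finset.min'_le
        rw [← hset]
        exact Finset.min'_mem _ _
    have hrepNe : ∀ (j : ℤ) (x y : M), ¬(dist x y ≤ (16:ℝ)^j) → rep j x ≠ rep j y := by
      intro j x y hxy heq
      apply hxy
      calc dist x y ≤ max (dist x (rep j x)) (dist (rep j x) y) := hU x (rep j x) y
        _ ≤ (16:ℝ)^j := by
            apply max_le (hrepMem j x)
            rw [heq, dist_comm]
            exact hrepMem j y
    -- the index set and the embedding
    set E : Finset ℤ :=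
      ((Finset.univ : Finset (M × M)).filter fun p => p.1 ≠ p.2).image
        (fun p => e p.1 p.2 - 1) with hE
    set f : M → X := fun z => ∑ j ∈ E, (16:ℝ)^j • s (rep j z) with hf
    -- the key two-sided estimate
    have key : ∀ x y : M, x ≠ y →
        (11/240) * dist x y ≤ ‖f x - f y‖ ∧ ‖f x - f y‖ ≤ (64/15) * dist x y := by
      intro x y hxy
      have hd : 0 < dist x y := dist_pos.mpr hxy
      set m := e x y with hm
      have hm1 : dist x y ≤ (16:ℝ)^m := key1 x y hxy
      have hm2 : (16:ℝ)^(m-1) < dist x y := key2 x y hxy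
      have h16m : (16:ℝ)^m = 16 * (16:ℝ)^(m-1) := by
        rw [show m = (m-1) + 1 by ring, zpow_add₀ (by norm_num : (16:ℝ) ≠ 0)]
        ring
      have hpow : (0:ℝ) < (16:ℝ)^(m-1) := zpow_pos (by norm_num) _
      have hmem : m - 1 ∈ E := by
        rw [hE]
        exact Finset.mem_image.mpr
          ⟨(x, y), Finset.mem_filter.mpr ⟨Finset.mem_univ _, hxy⟩, rfl⟩
      have hdiff : f x - f y = ∑ j ∈ E, (16:ℝ)^j • (s (rep j x) - s (rep j y)) := by
        rw [hf]
        rw [← Finset.sum_sub_distrib]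
        exact Finset.sum_congr rfl fun j _ => (smul_sub _ _ _).symm
      have hvanish : ∀ j ∈ E, (16:ℝ)^j • (s (rep j x) - s (rep j y)) ≠ 0 → j < m := by
        intro j _ hne
        by_contra hjm
        push_neg at hjm
        have hle : dist x y ≤ (16:ℝ)^j :=
          hm1.trans (zpow_le_zpow_right₀ (by norm_num) hjm)
        rw [hrepEq j x y hle] at hne
        simp at hne
      have hdiff2 : f x - f y
          = ∑ j ∈ E.filter (· < m), (16:ℝ)^j • (s (rep j x) - s (rep j y)) := by
        rw [hdiff, Finset.sum_filter_of_ne hvanish]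
      have hmem1 : m - 1 ∈ E.filter (· < m) :=
        Finset.mem_filter.mpr ⟨hmem, by simp⟩
      rw [hdiff2, ← Finset.add_sum_erase _ _ hmem1]
      set main := (16:ℝ)^(m-1) • (s (rep (m-1) x) - s (rep (m-1) y)) with hmainDef
      set tail := ∑ j ∈ (E.filter (· < m)).erase (m-1),
        (16:ℝ)^j • (s (rep j x) - s (rep j y)) with htailDef
      have hsub : ∀ j : ℤ, ‖s (rep j x) - s (rep j y)‖ ≤ 4 := fun j =>
        (norm_sub_le _ _).trans (by linarith [hsnorm (rep j x), hsnorm (rep j y)])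
      have htail : ‖tail‖ ≤ (4/15) * (16:ℝ)^(m-1) := by
        rw [htailDef]
        refine (norm_sum_le _ _).trans ?_
        have h1 : ∀ j ∈ (E.filter (· < m)).erase (m-1),
            ‖(16:ℝ)^j • (s (rep j x) - s (rep j y))‖ ≤ 4 * (16:ℝ)^j := by
          intro j _
          rw [norm_smul, Real.norm_eq_abs, abs_of_pos (zpow_pos (by norm_num) _)]
          have := hsub j
          nlinarith [zpow_pos (show (0:ℝ) < 16 by norm_num) j]
        refine (Finset.sum_le_sum h1).trans ?_
        rw [← Finset.mul_sum]
        have hco : ∀ j ∈ (E.filter (· < m)).erase (m-1), j ≤ m - 2 := by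
          intro j hj
          have h1 := Finset.mem_erase.mp hj
          have h2 := Finset.mem_filter.mp h1.2
          have := h1.1
          have h2' : j < m := h2.2
          omega
        have h2 := geomZ ((E.filter (· < m)).erase (m-1)) m hco
        nlinarith
      have hrepne : rep (m-1) x ≠ rep (m-1) y := hrepNe _ _ _ (not_le.mpr hm2)
      have hmain_lo : (16:ℝ)^(m-1) ≤ ‖main‖ := by
        rw [hmainDef, norm_smul, Real.norm_eq_abs, abs_of_pos hpow]
        have := hssep _ _ hrepne
        nlinarith
      have hmain_hi : ‖main‖ ≤ 4 * (16:ℝ)^(m-1) := by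
        rw [hmainDef, norm_smul, Real.norm_eq_abs, abs_of_pos hpow]
        have := hsub (m-1)
        nlinarith
      have hlow : ‖main‖ - ‖tail‖ ≤ ‖main + tail‖ := by
        have := norm_le_add_norm_add main tail
        linarith
      have hhigh : ‖main + tail‖ ≤ ‖main‖ + ‖tail‖ := norm_add_le _ _
      constructor
      · have hd16 : dist x y ≤ 16 * (16:ℝ)^(m-1) := by rw [← h16m]; exact hm1
        nlinarith
      · nlinarith
    -- conclusion
    refine ⟨f, ?_, 11/240, by norm_num, ?_⟩
    · intro a b hab
      by_contra hne
      have h := (key a b hne).1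
      rw [hab] at h
      simp only [sub_self, norm_zero] at h
      have hd : 0 < dist a b := dist_pos.mpr hne
      nlinarith
    · intro a b
      by_cases hab : a = b
      · subst hab
        simp
      · have h := key a b hab
        have hd : 0 < dist a b := dist_pos.mpr hab
        constructor
        · nlinarith [h.1]
        · nlinarith [h.2]

end Stmt
end
end

section
/- Let ε ∈ (0,1/2) and let α ∈ (0,1) be defined by (1/2)^α = 1/2 + ε. Then for every k ∈ ℕ and all vertices x, y of D_k: (d_{D_k}(x,y))^α ≤ d_{W_k}(x,y) ≤ (8/(1−4ε²))·(d_{D_k}(x,y))^α; in particular the identity bijections from the weighted diamonds W_k onto the α-snowflaked versions of the diamonds (D_k, d_{D_k}) have uniformly bounded distortions for all k. -/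
noncomputable section

open scoped ENNReal Classical

namespace Stmt

/-- Vertex set together with the (oriented) edge relation of the diamond graph `D n`. -/
def VE : ℕ → (V : Type) × (V → V → Prop)
  | 0 => ⟨Fin 2, fun u v => u = 0 ∧ v = 1⟩
  | n + 1 =>
      ⟨(VE n).1 ⊕ ({e : (VE n).1 × (VE n).1 // (VE n).2 e.1 e.2} × Bool),
        fun u v =>
          ∃ (e : {e : (VE n).1 × (VE n).1 // (VE n).2 e.1 e.2}) (b : Bool),
            (u = Sum.inl e.1.1 ∧ v = Sum.inr (e, b)) ∨
            (u = Sum.inr (e, b) ∧ v = Sum.inl e.1.2)⟩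

/-- Vertices of the diamond graph `D n` (equivalently, of the weighted diamond `W n`). -/
def Vert (n : ℕ) : Type := (VE n).1

/-- The (oriented) edge relation of the diamond graph `D n`. -/
def dEdge (n : ℕ) : Vert n → Vert n → Prop := (VE n).2

/-- The edges of generation `k` inside the vertex set of `D n`: the edges of `D k`,
transported to `Vert n` via the canonical inclusions.  These are the edges of the
weighted diamond `W n`, which get weight `(1/2 + ε) ^ k`. -/
def edgeAt : (n : ℕ) → (k : ℕ) → Vert n → Vert n → Prop
  | 0, k => fun u v => k = 0 ∧ dEdge 0 u v
  | n + 1, k => fun u v =>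
      (k = n + 1 ∧ dEdge (n + 1) u v) ∨
      (∃ u' v' : Vert n, u = Sum.inl u' ∧ v = Sum.inl v' ∧ edgeAt n k u' v')

/-- Edge weights of the weighted diamond `W n`:  the value is `(1/2 + ε) ^ k` if `{u, v}`
is an edge of generation `k`, and `∞` if `{u, v}` is not an edge of `W n`. -/
def wCost (ε : ℝ) (n : ℕ) (u v : Vert n) : ℝ≥0∞ :=
  ⨅ (k : ℕ) (_ : edgeAt n k u v ∨ edgeAt n k v u), ENNReal.ofReal ((1 / 2 + ε) ^ k)

/-- Total weight of a walk, recorded as the list of visited vertices. -/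
def walkCost {V : Type*} (c : V → V → ℝ≥0∞) : List V → ℝ≥0∞
  | [] => 0
  | [_] => 0
  | u :: v :: l => c u v + walkCost c (v :: l)

/-- The shortest-path (extended) distance associated to an edge-weight function `c`. -/
def spDist {V : Type*} (c : V → V → ℝ≥0∞) (u v : V) : ℝ≥0∞ :=
  ⨅ p : { l : List V // l.head? = some u ∧ l.getLast? = some v }, walkCost c p.1

/-- The shortest-path metric `d_{W_n}` of the weighted diamond `W n` (with parameter `ε`). -/
def dW (ε : ℝ) (n : ℕ) (u v : Vert n) : ℝ :=
  (spDist (wCost ε n) u v).toReal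

/-- The standard shortest-path metric `d_{D_k}` of the diamond `D k`, in which every edge of
`D k` has length `(1/2)^k`. -/
def dD (k : ℕ) (u v : Vert k) : ℝ :=
  (spDist
    (fun a b => ⨅ (_ : dEdge k a b ∨ dEdge k b a), ENNReal.ofReal ((1 / 2 : ℝ) ^ k))
    u v).toReal

section General
variable {V : Type*} (c : V → V → ℝ≥0∞)

lemma spDist_le_walkCost (l : List V) {u v : V} (h1 : l.head? = some u)
    (h2 : l.getLast? = some v) : spDist c u v ≤ walkCost c l :=
  iInf_le (fun p : { l : List V // l.head? = some u ∧ l.getLast? = some v } => walkCost c p.1)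
    ⟨l, h1, h2⟩

lemma spDist_self (u : V) : spDist c u u = 0 :=
  le_antisymm (by simpa [walkCost] using spDist_le_walkCost c [u] rfl rfl) zero_le

lemma spDist_le_cost (u v : V) : spDist c u v ≤ c u v := by
  simpa [walkCost] using spDist_le_walkCost c [u, v] rfl (by simp)

lemma le_walkCost {φ : V → V → ℝ≥0∞} (hself : ∀ a, φ a a = 0)
    (htri : ∀ a b d, φ a d ≤ φ a b + φ b d)
    (hle : ∀ a b, φ a b ≤ c a b) :
    ∀ (l : List V) (u v : V), l.head? = some u → l.getLast? = some v →
      φ u v ≤ walkCost c l := by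
  intro l
  induction l with
  | nil => intro u v h _; simp at h
  | cons a t ih =>
    intro u v h1 h2
    cases t with
    | nil =>
      simp only [List.head?_cons, Option.some.injEq] at h1
      simp only [List.getLast?_singleton, Option.some.injEq] at h2
      subst h1; subst h2
      simp [walkCost, hself]
    | cons b t' =>
      simp only [List.head?_cons, Option.some.injEq] at h1
      subst h1
      calc φ a v ≤ φ a b + φ b v := htri _ _ _
        _ ≤ c a b + walkCost c (b :: t') :=
          add_le_add (hle _ _) (ih b v rfl (by rw [← h2, List.getLast?_cons_cons]))
        _ = walkCost c (a :: b :: t') := rfl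

lemma le_spDist {φ : V → V → ℝ≥0∞} (hself : ∀ a, φ a a = 0)
    (htri : ∀ a b d, φ a d ≤ φ a b + φ b d)
    (hle : ∀ a b, φ a b ≤ c a b) (u v : V) :
    φ u v ≤ spDist c u v :=
  le_iInf fun p => le_walkCost c hself htri hle p.1 u v p.2.1 p.2.2

lemma walkCost_append (l1 l2 : List V) (v : V) :
    walkCost c (l1 ++ v :: l2) = walkCost c (l1 ++ [v]) + walkCost c (v :: l2) := by
  induction l1 with
  | nil => simp [walkCost]
  | cons a t ih =>
    cases t with
    | nil => simp [walkCost, add_assoc]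
    | cons b t' =>
      have h1 : walkCost c ((a :: b :: t') ++ v :: l2)
          = c a b + walkCost c ((b :: t') ++ v :: l2) := rfl
      have h2 : walkCost c ((a :: b :: t') ++ [v])
          = c a b + walkCost c ((b :: t') ++ [v]) := rfl
      rw [h1, h2, ih, add_assoc]

lemma spDist_triangle (u v w : V) :
    spDist c u w ≤ spDist c u v + spDist c v w := by
  conv_rhs => rw [spDist, spDist]
  rw [ENNReal.iInf_add]
  refine le_iInf fun p => ?_
  rw [ENNReal.add_iInf]
  refine le_iInf fun q => ?_
  obtain ⟨l1, hl1h, hl1l⟩ := p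
  obtain ⟨l2, hl2h, hl2l⟩ := q
  obtain ⟨t, rfl⟩ : ∃ t, l2 = v :: t := by
    cases l2 with
    | nil => simp at hl2h
    | cons x t => simp only [List.head?_cons, Option.some.injEq] at hl2h; exact ⟨t, by rw [hl2h]⟩
  have hne : l1 ≠ [] := by rintro rfl; simp at hl1h
  have hd : l1.dropLast ++ [v] = l1 := by
    have := List.dropLast_append_getLast? v (by
      rw [hl1l]; exact rfl)
    exact this
  have key : walkCost c (l1 ++ t) = walkCost c l1 + walkCost c (v :: t) := by
    conv_lhs => rw [← hd]
    rw [List.append_assoc, List.singleton_append, walkCost_append, hd]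
  refine le_trans (spDist_le_walkCost c (l1 ++ t) ?_ ?_) (le_of_eq key)
  · cases l1 with
    | nil => simp at hl1h
    | cons x s => simpa using hl1h
  · cases t with
    | nil =>
      simp only [List.getLast?_singleton, Option.some.injEq] at hl2l
      rw [List.append_nil, hl1l, hl2l]
    | cons y s =>
      rw [List.getLast?_append_of_ne_nil _ (by simp : (y :: s : List V) ≠ [])]
      rwa [List.getLast?_cons_cons] at hl2l

lemma walkCost_concat (l : List V) (b a : V) (h : l.getLast? = some b) :
    walkCost c (l ++ [a]) = walkCost c l + c b a := by
  induction l with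
  | nil => simp at h
  | cons x t ih =>
    cases t with
    | nil =>
      simp only [List.getLast?_singleton, Option.some.injEq] at h
      subst h
      simp [walkCost]
    | cons y s =>
      rw [List.getLast?_cons_cons] at h
      have h1 : walkCost c ((x :: y :: s) ++ [a]) = c x y + walkCost c ((y :: s) ++ [a]) := rfl
      rw [h1, ih h]
      show _ = (c x y + walkCost c (y :: s)) + c b a
      rw [add_assoc]

lemma walkCost_reverse (hc : ∀ a b, c a b = c b a) (l : List V) :
    walkCost c l.reverse = walkCost c l := by
  induction l with
  | nil => rfl
  | cons a t ih =>
    cases t with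
    | nil => rfl
    | cons b s =>
      have hrev : (a :: b :: s).reverse = (b :: s).reverse ++ [a] := by simp
      rw [hrev, walkCost_concat c _ b a (by simp), ih, hc b a]
      show _ = c a b + walkCost c (b :: s)
      rw [add_comm]

lemma spDist_symm (hc : ∀ a b, c a b = c b a) (u v : V) :
    spDist c u v = spDist c v u := by
  have key : ∀ x y : V, spDist c x y ≤ spDist c y x := by
    intro x y
    refine le_iInf fun p => ?_
    rw [← walkCost_reverse c hc]
    exact spDist_le_walkCost c _ (by rw [List.head?_reverse, p.2.2])
      (by rw [List.getLast?_reverse, p.2.1])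
  exact le_antisymm (key u v) (key v u)

lemma walkCost_mono {c c' : V → V → ℝ≥0∞} (h : ∀ a b, c a b ≤ c' a b) (l : List V) :
    walkCost c l ≤ walkCost c' l := by
  induction l with
  | nil => exact le_rfl
  | cons a t ih =>
    cases t with
    | nil => exact le_rfl
    | cons b s => exact add_le_add (h a b) ih

lemma spDist_mono {c c' : V → V → ℝ≥0∞} (h : ∀ a b, c a b ≤ c' a b) (u v : V) :
    spDist c u v ≤ spDist c' u v :=
  le_iInf fun p => le_trans (iInf_le _ p) (walkCost_mono h p.1)

lemma walkCost_smul (t : ℝ≥0∞) (l : List V) :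
    walkCost (fun a b => t * c a b) l = t * walkCost c l := by
  induction l with
  | nil => simp [walkCost]
  | cons a s ih =>
    cases s with
    | nil => simp [walkCost]
    | cons b s' =>
      show t * c a b + walkCost (fun a b => t * c a b) (b :: s') = _
      rw [ih]
      show _ = t * (c a b + walkCost c (b :: s'))
      rw [mul_add]

lemma spDist_le_mul {c c' : V → V → ℝ≥0∞} {t : ℝ≥0∞} (ht0 : t ≠ 0) (ht : t ≠ ⊤)
    (h : ∀ a b, c' a b ≤ t * c a b) (u v : V) :
    spDist c' u v ≤ t * spDist c u v := by
  conv_rhs => rw [spDist]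
  rw [ENNReal.mul_iInf_of_ne ht0 ht]
  refine le_iInf fun p => ?_
  rw [← walkCost_smul c t p.1]
  exact le_trans (spDist_le_walkCost c' p.1 p.2.1 p.2.2) (walkCost_mono h p.1)

lemma walkCost_quant {w : ℝ≥0∞} {c : V → V → ℝ≥0∞} (hc : ∀ a b, c a b = w ∨ c a b = ⊤) :
    ∀ l : List V, (∃ j : ℕ, walkCost c l = j * w) ∨ walkCost c l = ⊤ := by
  intro l
  induction l with
  | nil => exact Or.inl ⟨0, by simp [walkCost]⟩
  | cons a t ih =>
    cases t with
    | nil => exact Or.inl ⟨0, by simp [walkCost]⟩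
    | cons b s =>
      show (∃ j : ℕ, c a b + walkCost c (b :: s) = j * w) ∨ c a b + walkCost c (b :: s) = ⊤
      rcases hc a b with h1 | h1
      · rcases ih with ⟨j, h2⟩ | h2
        · exact Or.inl ⟨j + 1, by rw [h1, h2]; push_cast; ring⟩
        · exact Or.inr (by rw [h2, add_top])
      · exact Or.inr (by rw [h1, top_add])

lemma spDist_quant {w : ℝ≥0∞} {c : V → V → ℝ≥0∞} (hw0 : w ≠ 0) (hwt : w ≠ ⊤)
    (hc : ∀ a b, c a b = w ∨ c a b = ⊤) (u v : V) (N : ℕ)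
    (h : spDist c u v < (N + 1) * w) : spDist c u v ≤ N * w := by
  rw [spDist, iInf_lt_iff] at h
  obtain ⟨p, hp⟩ := h
  rcases walkCost_quant hc p.1 with ⟨j, hj⟩ | hj
  · rw [hj] at hp
    have hjN : (j : ℝ≥0∞) < N + 1 := by
      have := (ENNReal.mul_lt_mul_iff_left hw0 hwt).mp hp
      exact this
    have : j < N + 1 := by exact_mod_cast hjN
    have hle : (j : ℝ≥0∞) ≤ N := by exact_mod_cast Nat.lt_succ_iff.mp this
    calc spDist c u v ≤ walkCost c p.1 := spDist_le_walkCost c p.1 p.2.1 p.2.2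
      _ = j * w := hj
      _ ≤ N * w := mul_le_mul_left hle w
  · rw [hj] at hp; exact absurd hp (by simp)

lemma le_spDist_of_ne {w : ℝ≥0∞} {c : V → V → ℝ≥0∞} (hc : ∀ a b, w ≤ c a b)
    {u v : V} (huv : u ≠ v) : w ≤ spDist c u v := by
  refine le_iInf fun p => ?_
  obtain ⟨l, h1, h2⟩ := p
  cases l with
  | nil => simp at h1
  | cons a t =>
    cases t with
    | nil =>
      simp only [List.head?_cons, Option.some.injEq] at h1
      simp only [List.getLast?_singleton, Option.some.injEq] at h2
      exact absurd (h1.symm.trans h2) huv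
    | cons b s =>
      show w ≤ c a b + walkCost c (b :: s)
      exact le_trans (hc a b) le_self_add

end General

/-! ### Diamond-specific definitions -/

/-- Edge type of `D n`. -/
def EdgeT (n : ℕ) : Type := {e : Vert n × Vert n // dEdge n e.1 e.2}

/-- Inclusion of old vertices into the subdivided diamond. -/
def up {n : ℕ} (u : Vert n) : Vert (n + 1) := Sum.inl u

/-- The midpoint vertices of the subdivided diamond. -/
def mid {n : ℕ} (e : EdgeT n) (b : Bool) : Vert (n + 1) := Sum.inr (e, b)

/-- `Vert (n+1)` is literally a sum type. -/
def toSum {n : ℕ} (x : Vert (n + 1)) : Vert n ⊕ (EdgeT n × Bool) := x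

lemma toSum_spec {n : ℕ} (x : Vert (n + 1)) :
    (∃ u : Vert n, x = up u) ∨ (∃ (e : EdgeT n) (b : Bool), x = mid e b) := by
  rcases h : toSum x with u | ⟨e, b⟩
  · exact Or.inl ⟨u, h⟩
  · exact Or.inr ⟨e, b, h⟩

lemma dEdge_up_mid {n : ℕ} (e : EdgeT n) (b : Bool) : dEdge (n + 1) (up e.1.1) (mid e b) :=
  ⟨e, b, Or.inl ⟨rfl, rfl⟩⟩

lemma dEdge_mid_up {n : ℕ} (e : EdgeT n) (b : Bool) : dEdge (n + 1) (mid e b) (up e.1.2) :=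
  ⟨e, b, Or.inr ⟨rfl, rfl⟩⟩

lemma edgeAt_self : ∀ (n : ℕ) (u v : Vert n), dEdge n u v → edgeAt n n u v
  | 0, _, _, h => ⟨rfl, h⟩
  | n + 1, _, _, h => Or.inl ⟨rfl, h⟩

lemma edgeAt_up {n k : ℕ} {u v : Vert n} (h : edgeAt n k u v) :
    edgeAt (n + 1) k (up u) (up v) := Or.inr ⟨u, v, rfl, rfl, h⟩

/-! ### Cost functions -/

/-- Cost function of the unit-weight diamond `D n` (edges have length `(1/2)^n`). -/
def cD (n : ℕ) (a b : Vert n) : ℝ≥0∞ :=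
  ⨅ (_ : dEdge n a b ∨ dEdge n b a), ENNReal.ofReal ((1 / 2 : ℝ) ^ n)

/-- The (extended) shortest-path distance of `D n`. -/
def eD (n : ℕ) : Vert n → Vert n → ℝ≥0∞ := spDist (cD n)

/-- The (extended) shortest-path distance of `W n`. -/
def eW (ε : ℝ) (n : ℕ) : Vert n → Vert n → ℝ≥0∞ := spDist (wCost ε n)

lemma cD_symm (n : ℕ) (a b : Vert n) : cD n a b = cD n b a := by
  unfold cD; rw [or_comm]

lemma cD_of_edge {n : ℕ} {a b : Vert n} (h : dEdge n a b ∨ dEdge n b a) :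
    cD n a b = ENNReal.ofReal ((1 / 2 : ℝ) ^ n) := iInf_pos h

lemma cD_of_not_edge {n : ℕ} {a b : Vert n} (h : ¬(dEdge n a b ∨ dEdge n b a)) :
    cD n a b = ⊤ := iInf_neg h

lemma cD_quant (n : ℕ) (a b : Vert n) :
    cD n a b = ENNReal.ofReal ((1 / 2 : ℝ) ^ n) ∨ cD n a b = ⊤ := by
  by_cases h : dEdge n a b ∨ dEdge n b a
  · exact Or.inl (cD_of_edge h)
  · exact Or.inr (cD_of_not_edge h)

lemma le_cD (n : ℕ) (a b : Vert n) : ENNReal.ofReal ((1 / 2 : ℝ) ^ n) ≤ cD n a b := by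
  rcases cD_quant n a b with h | h <;> simp [h]

lemma wCost_symm (ε : ℝ) (n : ℕ) (a b : Vert n) : wCost ε n a b = wCost ε n b a := by
  unfold wCost
  exact iInf_congr fun k => by rw [or_comm]

lemma eD_symm (n : ℕ) (a b : Vert n) : eD n a b = eD n b a :=
  spDist_symm _ (cD_symm n) a b

lemma eW_symm (ε : ℝ) (n : ℕ) (a b : Vert n) : eW ε n a b = eW ε n b a :=
  spDist_symm _ (wCost_symm ε n) a b

lemma eD_triangle (n : ℕ) (a b c : Vert n) : eD n a c ≤ eD n a b + eD n b c :=
  spDist_triangle _ a b c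

lemma eW_triangle (ε : ℝ) (n : ℕ) (a b c : Vert n) : eW ε n a c ≤ eW ε n a b + eW ε n b c :=
  spDist_triangle _ a b c

lemma eD_self (n : ℕ) (a : Vert n) : eD n a a = 0 := spDist_self _ a

lemma eW_self (ε : ℝ) (n : ℕ) (a : Vert n) : eW ε n a a = 0 := spDist_self _ a

lemma wCost_le {ε : ℝ} {n k : ℕ} {u v : Vert n} (h : edgeAt n k u v ∨ edgeAt n k v u) :
    wCost ε n u v ≤ ENNReal.ofReal ((1 / 2 + ε) ^ k) := iInf₂_le k h

/-- Crossing a single old edge inside the subdivided diamond. -/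
lemma eD_up_up_of_edge {n : ℕ} {a b : Vert n} (h : dEdge n a b ∨ dEdge n b a) :
    eD (n + 1) (up a) (up b) ≤ ENNReal.ofReal ((1 / 2 : ℝ) ^ n) := by
  have hhalf : (0 : ℝ) ≤ (1 / 2 : ℝ) ^ (n + 1) := by positivity
  have hsum : ENNReal.ofReal ((1 / 2 : ℝ) ^ n)
      = ENNReal.ofReal ((1 / 2 : ℝ) ^ (n + 1)) + ENNReal.ofReal ((1 / 2 : ℝ) ^ (n + 1)) := by
    rw [← ENNReal.ofReal_add hhalf hhalf]
    ring_nf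
  rcases h with h | h
  · set e : EdgeT n := ⟨(a, b), h⟩ with he
    have kcost : walkCost (cD (n + 1)) [up a, mid e true, up b]
        = cD (n + 1) (up a) (mid e true) + (cD (n + 1) (mid e true) (up b) + 0) := rfl
    refine le_trans (spDist_le_walkCost _ [up a, mid e true, up b] rfl (by simp)) ?_
    rw [kcost, add_zero, hsum]
    exact add_le_add
      (le_of_eq (cD_of_edge (Or.inl (dEdge_up_mid e true))))
      (le_of_eq (cD_of_edge (Or.inl (dEdge_mid_up e true))))
  · set e : EdgeT n := ⟨(b, a), h⟩ with he
    have kcost : walkCost (cD (n + 1)) [up a, mid e true, up b]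
        = cD (n + 1) (up a) (mid e true) + (cD (n + 1) (mid e true) (up b) + 0) := rfl
    refine le_trans (spDist_le_walkCost _ [up a, mid e true, up b] rfl (by simp)) ?_
    rw [kcost, add_zero, hsum]
    exact add_le_add
      (le_of_eq (cD_of_edge (Or.inr (dEdge_mid_up e true))))
      (le_of_eq (cD_of_edge (Or.inr (dEdge_up_mid e true))))

/-- Subdivision does not increase distances. -/
lemma eD_up_le (n : ℕ) (u v : Vert n) : eD (n + 1) (up u) (up v) ≤ eD n u v := by
  refine le_spDist (cD n) (φ := fun a b => eD (n + 1) (up a) (up b))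
    (fun a => eD_self _ _) (fun a b d => eD_triangle _ _ _ _) (fun a b => ?_) u v
  rcases cD_quant n a b with h | h
  · by_cases he : dEdge n a b ∨ dEdge n b a
    · rw [h]; exact eD_up_up_of_edge he
    · rw [cD_of_not_edge he]; exact le_top
  · rw [h]; exact le_top

lemma eW_up_le (ε : ℝ) (n : ℕ) (u v : Vert n) :
    eW ε (n + 1) (up u) (up v) ≤ eW ε n u v := by
  refine le_spDist (wCost ε n) (φ := fun a b => eW ε (n + 1) (up a) (up b))
    (fun a => eW_self _ _ _) (fun a b d => eW_triangle _ _ _ _ _) (fun a b => ?_) u v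
  refine le_iInf₂ fun k h => ?_
  refine le_trans (spDist_le_cost _ _ _) (wCost_le ?_)
  rcases h with h | h
  · exact Or.inl (edgeAt_up h)
  · exact Or.inr (edgeAt_up h)

/-- Edge of generation `k` spans `D`-distance at most `(1/2)^k`. -/
lemma eD_le_of_edgeAt : ∀ {n k : ℕ} {u v : Vert n}, edgeAt n k u v →
    eD n u v ≤ ENNReal.ofReal ((1 / 2 : ℝ) ^ k) := by
  intro n
  induction n with
  | zero =>
    intro k u v h
    obtain ⟨rfl, h⟩ := h
    exact le_trans (spDist_le_cost _ _ _) (le_of_eq (cD_of_edge (Or.inl h)))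
  | succ n ih =>
    intro k u v h
    rcases h with ⟨rfl, h⟩ | ⟨u', v', rfl, rfl, h⟩
    · exact le_trans (spDist_le_cost _ _ _) (le_of_eq (cD_of_edge (Or.inl h)))
    · exact le_trans (eD_up_le n u' v') (ih h)

/-! ### Subdivision does not decrease distances between old vertices -/

/-- The (at most two) old vertices nearest to a vertex of the subdivision. -/
def ends {n : ℕ} (x : Vert (n + 1)) : Vert n × Vert n :=
  match toSum x with
  | .inl u => (u, u)
  | .inr (e, _) => (e.1.1, e.1.2)

/-- Distance from a vertex of the subdivision to its nearest old vertices. -/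
def hgt {n : ℕ} (x : Vert (n + 1)) : ℝ≥0∞ :=
  match toSum x with
  | .inl _ => 0
  | .inr _ => ENNReal.ofReal ((1 / 2 : ℝ) ^ (n + 1))

def pick {n : ℕ} (i : Bool) (p : Vert n × Vert n) : Vert n := cond i p.1 p.2

def m4 (n : ℕ) (x y : Vert (n + 1)) : ℝ≥0∞ :=
  ⨅ (i : Bool) (j : Bool), eD n (pick i (ends x)) (pick j (ends y))

lemma ends_up {n : ℕ} (u : Vert n) : ends (up u) = (u, u) := rfl
lemma ends_mid {n : ℕ} (e : EdgeT n) (b : Bool) : ends (mid e b) = (e.1.1, e.1.2) := rfl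
lemma hgt_up {n : ℕ} (u : Vert n) : hgt (up u) = 0 := rfl
lemma hgt_mid {n : ℕ} (e : EdgeT n) (b : Bool) :
    hgt (mid e b) = ENNReal.ofReal ((1 / 2 : ℝ) ^ (n + 1)) := rfl

lemma ends_close {n : ℕ} (y : Vert (n + 1)) (i j : Bool) :
    eD n (pick i (ends y)) (pick j (ends y)) ≤ hgt y + hgt y := by
  rcases toSum_spec y with ⟨u, rfl⟩ | ⟨e, b, rfl⟩
  · cases i <;> cases j <;> simp [ends_up, pick, eD_self]
  · have hsum : hgt (mid e b) + hgt (mid e b) = ENNReal.ofReal ((1 / 2 : ℝ) ^ n) := by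
      rw [hgt_mid, ← ENNReal.ofReal_add (by positivity) (by positivity)]
      ring_nf
    have h12 : eD n e.1.1 e.1.2 ≤ ENNReal.ofReal ((1 / 2 : ℝ) ^ n) :=
      le_trans (spDist_le_cost _ _ _) (le_of_eq (cD_of_edge (Or.inl e.2)))
    have h21 : eD n e.1.2 e.1.1 ≤ ENNReal.ofReal ((1 / 2 : ℝ) ^ n) :=
      le_trans (spDist_le_cost _ _ _) (le_of_eq (cD_of_edge (Or.inr e.2)))
    rw [hsum]
    cases i <;> cases j <;>
      simp only [ends_mid, pick, cond_true, cond_false] <;>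
      first
        | exact h12
        | exact h21
        | · rw [eD_self]; exact zero_le

lemma m4_le {n : ℕ} (x y : Vert (n + 1)) (i j : Bool) :
    m4 n x y ≤ eD n (pick i (ends x)) (pick j (ends y)) := by unfold m4; exact iInf_le_of_le i (iInf_le _ j)

lemma iInf2_add {ι κ : Sort*} (f : ι → κ → ℝ≥0∞) (a : ℝ≥0∞) :
    (⨅ i, ⨅ j, f i j) + a = ⨅ i, ⨅ j, (f i j + a) := by
  rw [ENNReal.iInf_add]
  exact iInf_congr fun i => ENNReal.iInf_add

lemma add_iInf2 {ι κ : Sort*} (f : ι → κ → ℝ≥0∞) (a : ℝ≥0∞) :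
    a + (⨅ i, ⨅ j, f i j) = ⨅ i, ⨅ j, (a + f i j) := by
  rw [ENNReal.add_iInf]
  exact iInf_congr fun i => ENNReal.add_iInf

lemma m4_triangle {n : ℕ} (x y z : Vert (n + 1)) :
    m4 n x z ≤ m4 n x y + (m4 n y z + (hgt y + hgt y)) := by
  rw [show m4 n x y = ⨅ (i : Bool) (j : Bool), eD n (pick i (ends x)) (pick j (ends y)) from rfl,
    iInf2_add]
  refine le_iInf fun i => le_iInf fun j => ?_
  rw [show m4 n y z = ⨅ (i : Bool) (j : Bool), eD n (pick i (ends y)) (pick j (ends z)) from rfl,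
    iInf2_add, add_iInf2]
  refine le_iInf fun j' => le_iInf fun l => ?_
  calc m4 n x z ≤ eD n (pick i (ends x)) (pick l (ends z)) := m4_le x z i l
    _ ≤ eD n (pick i (ends x)) (pick j (ends y)) +
        eD n (pick j (ends y)) (pick l (ends z)) := eD_triangle _ _ _ _
    _ ≤ eD n (pick i (ends x)) (pick j (ends y)) +
        (eD n (pick j (ends y)) (pick j' (ends y)) +
          eD n (pick j' (ends y)) (pick l (ends z))) :=
      add_le_add_right (eD_triangle _ _ _ _) _
    _ ≤ eD n (pick i (ends x)) (pick j (ends y)) +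
        ((hgt y + hgt y) + eD n (pick j' (ends y)) (pick l (ends z))) :=
      add_le_add_right (add_le_add_left (ends_close y j j') _) _
    _ = eD n (pick i (ends x)) (pick j (ends y)) +
        (eD n (pick j' (ends y)) (pick l (ends z)) + (hgt y + hgt y)) := by ring

/-- Subdivision does not decrease distances between old vertices. -/
lemma eD_le_up (n : ℕ) (u v : Vert n) : eD n u v ≤ eD (n + 1) (up u) (up v) := by
  classical
  set φ : Vert (n + 1) → Vert (n + 1) → ℝ≥0∞ :=
    fun x y => if x = y then 0 else m4 n x y + hgt x + hgt y with hφ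
  have hself : ∀ a, φ a a = 0 := fun a => if_pos rfl
  have htri : ∀ a b d, φ a d ≤ φ a b + φ b d := by
    intro a b d
    by_cases had : a = d
    · rw [had, hself]; exact zero_le
    by_cases hab : a = b
    · rw [hab, hself, zero_add]
    by_cases hbd : b = d
    · rw [hbd, hself, add_zero]
    simp only [hφ, if_neg had, if_neg hab, if_neg hbd]
    calc m4 n a d + hgt a + hgt d
        ≤ (m4 n a b + (m4 n b d + (hgt b + hgt b))) + hgt a + hgt d :=
          add_le_add_left (add_le_add_left (m4_triangle a b d) _) _
      _ = (m4 n a b + hgt a + hgt b) + (m4 n b d + hgt b + hgt d) := by ring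
  have hle : ∀ a b, φ a b ≤ cD (n + 1) a b := by
    intro a b
    by_cases hedge : dEdge (n + 1) a b ∨ dEdge (n + 1) b a
    · rw [cD_of_edge hedge]
      have main : ∀ (e : EdgeT n) (bb : Bool),
          φ (up e.1.1) (mid e bb) ≤ ENNReal.ofReal ((1 / 2 : ℝ) ^ (n + 1)) ∧
          φ (mid e bb) (up e.1.2) ≤ ENNReal.ofReal ((1 / 2 : ℝ) ^ (n + 1)) := by
        intro e bb
        constructor
        · have hne : (up e.1.1 : Vert (n + 1)) ≠ mid e bb := fun h => by
            exact Sum.inl_ne_inr h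
          rw [hφ]
          simp only [if_neg hne]
          have : m4 n (up e.1.1) (mid e bb) ≤ eD n (pick true (ends (up e.1.1)))
              (pick true (ends (mid e bb))) := m4_le _ _ true true
          rw [ends_up, ends_mid] at this
          simp only [pick, cond_true] at this
          rw [eD_self] at this
          calc m4 n (up e.1.1) (mid e bb) + hgt (up e.1.1) + hgt (mid e bb)
              ≤ 0 + 0 + ENNReal.ofReal ((1 / 2 : ℝ) ^ (n + 1)) := by
                rw [hgt_up, hgt_mid]; exact add_le_add_left (add_le_add_left this _) _
            _ = ENNReal.ofReal ((1 / 2 : ℝ) ^ (n + 1)) := by rw [zero_add, zero_add]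
        · have hne : (mid e bb : Vert (n + 1)) ≠ up e.1.2 := fun h => by
            exact Sum.inr_ne_inl h
          rw [hφ]
          simp only [if_neg hne]
          have : m4 n (mid e bb) (up e.1.2) ≤ eD n (pick false (ends (mid e bb)))
              (pick false (ends (up e.1.2))) := m4_le _ _ false false
          rw [ends_up, ends_mid] at this
          simp only [pick, cond_false] at this
          rw [eD_self] at this
          calc m4 n (mid e bb) (up e.1.2) + hgt (mid e bb) + hgt (up e.1.2)
              ≤ 0 + ENNReal.ofReal ((1 / 2 : ℝ) ^ (n + 1)) + 0 := by
                rw [hgt_up, hgt_mid]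
                exact add_le_add_left (add_le_add_left this _) _
            _ = ENNReal.ofReal ((1 / 2 : ℝ) ^ (n + 1)) := by rw [zero_add, add_zero]
      have hsymm : ∀ x y : Vert (n + 1), φ x y = φ y x := by
        intro x y
        by_cases h : x = y
        · rw [h]
        · have h' : y ≠ x := fun hh => h hh.symm
          rw [hφ]
          simp only [if_neg h, if_neg h']
          have : m4 n x y = m4 n y x := by
            rw [m4, m4]
            rw [iInf_comm]
            exact iInf_congr fun i => iInf_congr fun j => eD_symm n _ _
          rw [this]; ring
      rcases hedge with ⟨e, bb, ⟨ha, hb⟩ | ⟨ha, hb⟩⟩ | ⟨e, bb, ⟨ha, hb⟩ | ⟨ha, hb⟩⟩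
      · rw [ha, hb]; exact (main e bb).1
      · rw [ha, hb]; exact (main e bb).2
      · rw [hsymm, ha, hb]; exact (main e bb).1
      · rw [hsymm, ha, hb]; exact (main e bb).2
    · rw [cD_of_not_edge hedge]; exact le_top
  have h := le_spDist (cD (n + 1)) hself htri hle (up u) (up v)
  by_cases huv : u = v
  · rw [huv, eD_self]; exact zero_le
  · have hne : (up u : Vert (n + 1)) ≠ up v := fun h' => huv (Sum.inl.inj h')
    have hval : φ (up u) (up v) = eD n u v := by
      rw [hφ]
      simp only [if_neg hne]
      rw [hgt_up, hgt_up, add_zero, add_zero]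
      rw [m4, ends_up, ends_up]
      have : ∀ i j : Bool, eD n (pick i (u, u)) (pick j (v, v)) = eD n u v := by
        intro i j; cases i <;> cases j <;> rfl
      calc (⨅ (i : Bool) (j : Bool), eD n (pick i (u, u)) (pick j (v, v)))
          = ⨅ (_ : Bool) (_ : Bool), eD n u v := by
            exact iInf_congr fun i => iInf_congr fun j => this i j
        _ = eD n u v := by rw [iInf_const, iInf_const]
    rw [← hval]
    exact h

/-! ### Iterated inclusions, descent, scaling -/

def incl (m : ℕ) : (j : ℕ) → Vert m → Vert (m + j)
  | 0, x => x
  | j + 1, x => up (incl m j x)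

lemma eD_incl_le (m : ℕ) : ∀ (j : ℕ) (u v : Vert m),
    eD (m + j) (incl m j u) (incl m j v) ≤ eD m u v
  | 0, u, v => le_rfl
  | j + 1, u, v => le_trans (eD_up_le (m + j) _ _) (eD_incl_le m j u v)

lemma le_eD_incl (m : ℕ) : ∀ (j : ℕ) (u v : Vert m),
    eD m u v ≤ eD (m + j) (incl m j u) (incl m j v)
  | 0, u, v => le_rfl
  | j + 1, u, v => le_trans (le_eD_incl m j u v) (eD_le_up (m + j) _ _)

lemma eW_incl_le (ε : ℝ) (m : ℕ) : ∀ (j : ℕ) (u v : Vert m),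
    eW ε (m + j) (incl m j u) (incl m j v) ≤ eW ε m u v
  | 0, u, v => le_rfl
  | j + 1, u, v => le_trans (eW_up_le ε (m + j) _ _) (eW_incl_le ε m j u v)

/-- Every vertex can descend cheaply to a vertex of generation at most `m`. -/
lemma descent (ε : ℝ) (hε0 : 0 ≤ ε) (m : ℕ) : ∀ (j : ℕ) (x : Vert (m + j)),
    ∃ z : Vert m,
      eW ε (m + j) x (incl m j z)
        ≤ ENNReal.ofReal (∑ i ∈ Finset.range j, (1 / 2 + ε) ^ (m + 1 + i)) ∧
      eD (m + j) x (incl m j z)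
        ≤ ENNReal.ofReal (∑ i ∈ Finset.range j, (1 / 2 : ℝ) ^ (m + 1 + i)) := by
  intro j
  induction j with
  | zero =>
    intro x
    exact ⟨x, by simp [incl, eW_self], by simp [incl, eD_self]⟩
  | succ j ih =>
    intro x
    rcases toSum_spec x with ⟨x', rfl⟩ | ⟨e, b, rfl⟩
    · obtain ⟨z, hW, hD⟩ := ih x'
      refine ⟨z, ?_, ?_⟩
      · refine le_trans (eW_up_le ε (m + j) _ _) (le_trans hW ?_)
        refine ENNReal.ofReal_le_ofReal ?_
        exact Finset.sum_le_sum_of_subset_of_nonneg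
          (Finset.range_subset_range.mpr (Nat.le_succ j))
          (fun i _ _ => by positivity)
      · refine le_trans (eD_up_le (m + j) _ _) (le_trans hD ?_)
        refine ENNReal.ofReal_le_ofReal ?_
        exact Finset.sum_le_sum_of_subset_of_nonneg
          (Finset.range_subset_range.mpr (Nat.le_succ j))
          (fun i _ _ => by positivity)
    · obtain ⟨z, hW, hD⟩ := ih e.1.1
      have hedge : dEdge (m + j + 1) (up e.1.1) (mid e b) := dEdge_up_mid e b
      refine ⟨z, ?_, ?_⟩
      · calc eW ε (m + j + 1) (mid e b) (incl m (j + 1) z)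
            ≤ eW ε (m + j + 1) (mid e b) (up e.1.1)
              + eW ε (m + j + 1) (up e.1.1) (up (incl m j z)) := eW_triangle _ _ _ _ _
          _ ≤ ENNReal.ofReal ((1 / 2 + ε) ^ (m + j + 1))
              + ENNReal.ofReal (∑ i ∈ Finset.range j, (1 / 2 + ε) ^ (m + 1 + i)) := by
              refine add_le_add ?_ (le_trans (eW_up_le ε (m + j) _ _) hW)
              refine le_trans (spDist_le_cost _ _ _) (wCost_le ?_)
              exact Or.inr (edgeAt_self _ _ _ hedge)
          _ ≤ ENNReal.ofReal (∑ i ∈ Finset.range (j + 1), (1 / 2 + ε) ^ (m + 1 + i)) := by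
              rw [← ENNReal.ofReal_add (by positivity) (by positivity),
                Finset.sum_range_succ]
              refine ENNReal.ofReal_le_ofReal (le_of_eq ?_)
              have : m + 1 + j = m + j + 1 := by ring
              rw [this]; ring
      · calc eD (m + j + 1) (mid e b) (incl m (j + 1) z)
            ≤ eD (m + j + 1) (mid e b) (up e.1.1)
              + eD (m + j + 1) (up e.1.1) (up (incl m j z)) := eD_triangle _ _ _ _
          _ ≤ ENNReal.ofReal ((1 / 2 : ℝ) ^ (m + j + 1))
              + ENNReal.ofReal (∑ i ∈ Finset.range j, (1 / 2 : ℝ) ^ (m + 1 + i)) := by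
              refine add_le_add ?_ (le_trans (eD_up_le (m + j) _ _) hD)
              refine le_trans (spDist_le_cost _ _ _) (le_of_eq ?_)
              rw [cD_symm]
              exact cD_of_edge (Or.inl hedge)
          _ ≤ ENNReal.ofReal (∑ i ∈ Finset.range (j + 1), (1 / 2 : ℝ) ^ (m + 1 + i)) := by
              rw [← ENNReal.ofReal_add (by positivity) (by positivity),
                Finset.sum_range_succ]
              refine ENNReal.ofReal_le_ofReal (le_of_eq ?_)
              have : m + 1 + j = m + j + 1 := by ring
              rw [this]; ring

/-- On level `m`, `W`-distances are controlled by `D`-distances. -/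
lemma eW_le_scaled (ε : ℝ) (hε0 : 0 < ε) (m : ℕ) (z z' : Vert m) :
    eW ε m z z' ≤ ENNReal.ofReal ((1 + 2 * ε) ^ m) * eD m z z' := by
  have ht0 : ENNReal.ofReal ((1 + 2 * ε) ^ m) ≠ 0 := by
    simp only [ne_eq, ENNReal.ofReal_eq_zero, not_le]
    positivity
  refine spDist_le_mul ht0 ENNReal.ofReal_ne_top (fun a b => ?_) z z'
  by_cases h : dEdge m a b ∨ dEdge m b a
  · rw [cD_of_edge h, ← ENNReal.ofReal_mul (by positivity)]
    have heq : (1 + 2 * ε) ^ m * (1 / 2 : ℝ) ^ m = (1 / 2 + ε) ^ m := by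
      rw [← mul_pow]; ring_nf
    rw [heq]
    rcases h with h | h
    · exact wCost_le (Or.inl (edgeAt_self _ _ _ h))
    · exact wCost_le (Or.inr (edgeAt_self _ _ _ h))
  · rw [cD_of_not_edge h, ENNReal.mul_top ht0]
    exact le_top

/-! ### Finiteness -/

lemma vert0_edge {z z' : Vert 0} (h : z ≠ z') : dEdge 0 z z' ∨ dEdge 0 z' z := by
  have h2 : ∀ w : Fin 2, w = 0 ∨ w = 1 := by decide
  rcases h2 z with hz | hz <;> rcases h2 z' with hz' | hz'
  · exact absurd (hz.trans hz'.symm) h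
  · exact Or.inl ⟨hz, hz'⟩
  · exact Or.inr ⟨hz', hz⟩
  · exact absurd (hz.trans hz'.symm) h

lemma eD0_le (z z' : Vert 0) : eD 0 z z' ≤ ENNReal.ofReal 1 := by
  by_cases h : z = z'
  · rw [h, eD_self]; exact zero_le
  · refine le_trans (spDist_le_cost _ _ _) (le_of_eq ?_)
    have := cD_of_edge (vert0_edge h)
    simpa using this

lemma eW0_le (ε : ℝ) (z z' : Vert 0) : eW ε 0 z z' ≤ ENNReal.ofReal 1 := by
  by_cases h : z = z'
  · rw [h, eW_self]; exact zero_le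
  · refine le_trans (spDist_le_cost _ _ _) (le_trans (wCost_le (k := 0) ?_) (by simp))
    rcases vert0_edge h with h' | h'
    · exact Or.inl (edgeAt_self 0 _ _ h')
    · exact Or.inr (edgeAt_self 0 _ _ h')

lemma eD_ne_top (n : ℕ) (x y : Vert n) : eD n x y ≠ ⊤ := by
  obtain ⟨j, rfl⟩ : ∃ j, n = 0 + j := ⟨n, (Nat.zero_add n).symm⟩
  obtain ⟨z, -, hDz⟩ := descent 0 le_rfl 0 j x
  obtain ⟨z', -, hDz'⟩ := descent 0 le_rfl 0 j y
  have tri : eD (0 + j) x y ≤ eD (0 + j) x (incl 0 j z) + eD 0 z z'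
      + eD (0 + j) y (incl 0 j z') := by
    calc eD (0 + j) x y ≤ eD (0 + j) x (incl 0 j z) + eD (0 + j) (incl 0 j z) y :=
          eD_triangle _ _ _ _
      _ ≤ eD (0 + j) x (incl 0 j z) +
          (eD (0 + j) (incl 0 j z) (incl 0 j z') + eD (0 + j) (incl 0 j z') y) :=
          add_le_add_right (eD_triangle _ _ _ _) _
      _ ≤ _ := by
          rw [eD_symm (0 + j) (incl 0 j z') y]
          exact add_le_add_right (add_le_add_left (eD_incl_le 0 j z z') _) _ |>.trans
            (le_of_eq (add_assoc _ _ _).symm)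
  exact ne_top_of_le_ne_top (by simp)
    (tri.trans (add_le_add (add_le_add hDz (eD0_le z z')) hDz'))

lemma eW_ne_top (ε : ℝ) (hε0 : 0 ≤ ε) (n : ℕ) (x y : Vert n) : eW ε n x y ≠ ⊤ := by
  obtain ⟨j, rfl⟩ : ∃ j, n = 0 + j := ⟨n, (Nat.zero_add n).symm⟩
  obtain ⟨z, hWz, -⟩ := descent ε hε0 0 j x
  obtain ⟨z', hWz', -⟩ := descent ε hε0 0 j y
  have tri : eW ε (0 + j) x y ≤ eW ε (0 + j) x (incl 0 j z) + eW ε 0 z z'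
      + eW ε (0 + j) y (incl 0 j z') := by
    calc eW ε (0 + j) x y ≤ eW ε (0 + j) x (incl 0 j z) + eW ε (0 + j) (incl 0 j z) y :=
          eW_triangle _ _ _ _ _
      _ ≤ eW ε (0 + j) x (incl 0 j z) +
          (eW ε (0 + j) (incl 0 j z) (incl 0 j z') + eW ε (0 + j) (incl 0 j z') y) :=
          add_le_add_right (eW_triangle _ _ _ _ _) _
      _ ≤ _ := by
          rw [eW_symm ε (0 + j) (incl 0 j z') y]
          exact add_le_add_right (add_le_add_left (eW_incl_le ε 0 j z z') _) _ |>.trans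
            (le_of_eq (add_assoc _ _ _).symm)
  exact ne_top_of_le_ne_top (by simp)
    (tri.trans (add_le_add (add_le_add hWz (eW0_le ε z z')) hWz'))

/-! ### The two main estimates -/

lemma snowflake_le (ε α : ℝ) (hα0 : 0 < α) (hα1 : α < 1)
    (hα : (1 / 2 : ℝ) ^ α = 1 / 2 + ε) (k : ℕ) (x y : Vert k) :
    eD k x y ^ α ≤ eW ε k x y := by
  refine le_spDist (wCost ε k) (φ := fun a b => eD k a b ^ α) ?_ ?_ ?_ x y
  · intro a
    show eD k a a ^ α = 0
    rw [eD_self]; exact ENNReal.zero_rpow_of_pos hα0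
  · intro a b d
    show eD k a d ^ α ≤ eD k a b ^ α + eD k b d ^ α
    calc eD k a d ^ α ≤ (eD k a b + eD k b d) ^ α :=
        ENNReal.rpow_le_rpow (eD_triangle k a b d) hα0.le
      _ ≤ _ := ENNReal.rpow_add_le_add_rpow _ _ hα0.le hα1.le
  · intro a b
    show eD k a b ^ α ≤ wCost ε k a b
    refine le_iInf fun j => le_iInf fun h => ?_
    have hD : eD k a b ≤ ENNReal.ofReal ((1 / 2 : ℝ) ^ j) := by
      rcases h with h | h
      · exact eD_le_of_edgeAt h
      · rw [eD_symm]; exact eD_le_of_edgeAt h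
    calc eD k a b ^ α ≤ ENNReal.ofReal ((1 / 2 : ℝ) ^ j) ^ α :=
        ENNReal.rpow_le_rpow hD hα0.le
      _ = ENNReal.ofReal (((1 / 2 : ℝ) ^ j) ^ α) := ENNReal.ofReal_rpow_of_pos (by positivity)
      _ = ENNReal.ofReal ((1 / 2 + ε) ^ j) := by
          congr 1
          rw [← Real.rpow_natCast (1 / 2 : ℝ) j, ← Real.rpow_mul (by norm_num), mul_comm,
            Real.rpow_mul (by norm_num), hα, Real.rpow_natCast]

lemma pow_snowflake (ε α : ℝ) (hα : (1 / 2 : ℝ) ^ α = 1 / 2 + ε) (j : ℕ) :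
    ((1 / 2 : ℝ) ^ j) ^ α = (1 / 2 + ε) ^ j := by
  rw [← Real.rpow_natCast (1 / 2 : ℝ) j, ← Real.rpow_mul (by norm_num), mul_comm,
    Real.rpow_mul (by norm_num), hα, Real.rpow_natCast]

lemma alg_aux {p s : ℝ} (h1 : p + s = 1) (hs : s ≠ 0) (hp : p ≠ 0) (m : ℕ) :
    2 * (p ^ (m + 1) / s) + 2 * p ^ m = 2 / (s * p) * p ^ (m + 1) := by
  have hs1 : s = 1 - p := by linarith
  subst hs1
  rw [pow_succ]
  field_simp
  ring

lemma upper_main (ε : ℝ) (hε0 : 0 < ε) (hε : ε < 1 / 2)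
    (α : ℝ) (hα0 : 0 < α) (hα : (1 / 2 : ℝ) ^ α = 1 / 2 + ε)
    (n : ℕ) (x y : Vert n) (hxy : x ≠ y) :
    eW ε n x y ≤ ENNReal.ofReal (8 / (1 - 4 * ε ^ 2) * ((eD n x y).toReal) ^ α) := by
  have hδ0 : (0 : ℝ) < 1 / 2 + ε := by linarith
  have hδ1 : (1 / 2 : ℝ) + ε < 1 := by linarith
  have hs0 : (0 : ℝ) < 1 / 2 - ε := by linarith
  have h4 : (0 : ℝ) < 1 - 4 * ε ^ 2 := by nlinarith
  have hDfin := eD_ne_top n x y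
  obtain ⟨d, hd⟩ : ∃ d : ℝ, d = (eD n x y).toReal := ⟨_, rfl⟩
  rw [← hd]
  have hposE : ENNReal.ofReal ((1 / 2 : ℝ) ^ n) ≤ eD n x y := le_spDist_of_ne (le_cD n) hxy
  have hd_lb : (1 / 2 : ℝ) ^ n ≤ d := by
    have := ENNReal.toReal_mono hDfin hposE
    rw [ENNReal.toReal_ofReal (by positivity)] at this
    rw [hd]; exact this
  have hd0 : (0 : ℝ) < d := lt_of_lt_of_le (by positivity) hd_lb
  have hEd : ENNReal.ofReal d = eD n x y := by rw [hd]; exact ENNReal.ofReal_toReal hDfin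
  have hex : ∃ m : ℕ, (1 / 2 : ℝ) ^ (m + 1) < d := by
    obtain ⟨n0, hn0⟩ := exists_pow_lt_of_lt_one hd0 (by norm_num : (1 / 2 : ℝ) < 1)
    refine ⟨n0, lt_of_le_of_lt ?_ hn0⟩
    rw [pow_succ]
    nlinarith [pow_pos (show (0 : ℝ) < 1 / 2 by norm_num) n0]
  set m := Nat.find hex with hm_def
  have hm : (1 / 2 : ℝ) ^ (m + 1) < d := Nat.find_spec hex
  have hmk : m ≤ n := by
    by_contra hc
    push_neg at hc
    refine Nat.find_min hex hc ?_
    refine lt_of_lt_of_le ?_ hd_lb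
    rw [pow_succ]
    nlinarith [pow_pos (show (0 : ℝ) < 1 / 2 by norm_num) n]
  have hdm : d ≤ (1 / 2 : ℝ) ^ m ∨ m = 0 := by
    rcases Nat.eq_zero_or_pos m with h0 | hpos
    · exact Or.inr h0
    · left
      have hmin := Nat.find_min hex (show m - 1 < m from Nat.sub_lt hpos one_pos)
      have hmm1 : m - 1 + 1 = m := by omega
      rw [hmm1] at hmin
      exact le_of_not_gt hmin
  clear_value m
  clear hm_def
  obtain ⟨j, rfl⟩ := Nat.exists_eq_add_of_le hmk
  obtain ⟨z, hWz, hDz⟩ := descent ε hε0.le m j x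
  obtain ⟨z', hWz', hDz'⟩ := descent ε hε0.le m j y
  set Sh : ℝ := ∑ i ∈ Finset.range j, (1 / 2 : ℝ) ^ (m + 1 + i) with hSh_def
  set Sδ : ℝ := ∑ i ∈ Finset.range j, (1 / 2 + ε) ^ (m + 1 + i) with hSδ_def
  have hSh_nonneg : 0 ≤ Sh := Finset.sum_nonneg fun i _ => by positivity
  have hSδ_nonneg : 0 ≤ Sδ := Finset.sum_nonneg fun i _ => by positivity
  have hSh_eq : Sh = (1 / 2 : ℝ) ^ m - (1 / 2 : ℝ) ^ (m + j) := by
    rw [hSh_def]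
    calc (∑ i ∈ Finset.range j, (1 / 2 : ℝ) ^ (m + 1 + i))
        = ∑ i ∈ Finset.range j, (1 / 2 : ℝ) ^ (m + 1) * (1 / 2 : ℝ) ^ i :=
          Finset.sum_congr rfl fun i _ => by rw [← pow_add]
      _ = (1 / 2 : ℝ) ^ (m + 1) * ∑ i ∈ Finset.range j, (1 / 2 : ℝ) ^ i := by
          rw [Finset.mul_sum]
      _ = (1 / 2 : ℝ) ^ m - (1 / 2 : ℝ) ^ (m + j) := by
          rw [geom_sum_eq (by norm_num : (1 / 2 : ℝ) ≠ 1)]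
          field_simp
          ring
  have hSδ_le : Sδ ≤ (1 / 2 + ε) ^ (m + 1) / (1 / 2 - ε) := by
    rw [hSδ_def]
    have h1 : (∑ i ∈ Finset.range j, (1 / 2 + ε) ^ (m + 1 + i))
        = (1 / 2 + ε) ^ (m + 1) * ∑ i ∈ Finset.range j, (1 / 2 + ε) ^ i := by
      rw [Finset.mul_sum]
      exact Finset.sum_congr rfl fun i _ => by rw [← pow_add]
    rw [h1]
    have hfrac : (∑ i ∈ Finset.range j, (1 / 2 + ε) ^ i) ≤ 1 / (1 / 2 - ε) := by
      rw [geom_sum_eq (ne_of_lt hδ1)]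
      rw [show ((1 / 2 + ε) ^ j - 1) / (1 / 2 + ε - 1) = (1 - (1 / 2 + ε) ^ j) / (1 / 2 - ε) by
        rw [div_eq_div_iff (by linarith) (by linarith)]; ring]
      rw [div_le_div_iff₀ hs0 hs0]
      nlinarith [pow_nonneg hδ0.le j]
    calc (1 / 2 + ε) ^ (m + 1) * ∑ i ∈ Finset.range j, (1 / 2 + ε) ^ i
        ≤ (1 / 2 + ε) ^ (m + 1) * (1 / (1 / 2 - ε)) :=
          mul_le_mul_of_nonneg_left hfrac (by positivity)
      _ = (1 / 2 + ε) ^ (m + 1) / (1 / 2 - ε) := by ring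
  -- bound on eD m z z'
  have hzz : eD m z z' ≤ ENNReal.ofReal (2 * (1 / 2 : ℝ) ^ m) := by
    rcases hdm with hdm | rfl
    · have tri : eD m z z' ≤ ENNReal.ofReal (Sh + (d + Sh)) := by
        calc eD m z z' ≤ eD (m + j) (incl m j z) (incl m j z') := le_eD_incl m j z z'
          _ ≤ eD (m + j) (incl m j z) x +
              (eD (m + j) x y + eD (m + j) y (incl m j z')) :=
            le_trans (eD_triangle _ _ x _) (add_le_add_right (eD_triangle _ x y _) _)
          _ ≤ ENNReal.ofReal Sh + (ENNReal.ofReal d + ENNReal.ofReal Sh) := by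
              refine add_le_add ?_ (add_le_add (le_of_eq hEd.symm) ?_)
              · rw [eD_symm]; exact hDz
              · exact hDz'
          _ = ENNReal.ofReal (Sh + (d + Sh)) := by
              rw [← ENNReal.ofReal_add hd0.le hSh_nonneg,
                ← ENNReal.ofReal_add hSh_nonneg (add_nonneg hd0.le hSh_nonneg)]
      have hlt : eD m z z' < (((2 : ℕ) : ℝ≥0∞) + 1) * ENNReal.ofReal ((1 / 2 : ℝ) ^ m) := by
        refine lt_of_le_of_lt tri ?_
        have hval : (((2 : ℕ) : ℝ≥0∞) + 1) * ENNReal.ofReal ((1 / 2 : ℝ) ^ m)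
            = ENNReal.ofReal (3 * (1 / 2 : ℝ) ^ m) := by
          rw [ENNReal.ofReal_mul (by norm_num : (0:ℝ) ≤ 3)]
          norm_num
        rw [hval]
        rw [ENNReal.ofReal_lt_ofReal_iff (by positivity)]
        have hpj : (0 : ℝ) < (1 / 2 : ℝ) ^ (m + j) := by positivity
        rw [hSh_eq]
        nlinarith
      have := spDist_quant (w := ENNReal.ofReal ((1 / 2 : ℝ) ^ m))
        (by simp only [ne_eq, ENNReal.ofReal_eq_zero, not_le]; positivity)
        ENNReal.ofReal_ne_top (cD_quant m) z z' 2 hlt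
      refine le_trans this (le_of_eq ?_)
      rw [ENNReal.ofReal_mul (by norm_num : (0:ℝ) ≤ 2)]
      norm_num
    · refine le_trans (eD0_le z z') (ENNReal.ofReal_le_ofReal (by norm_num))
  -- bound on eW m z z'
  have hWzz : eW ε m z z' ≤ ENNReal.ofReal (2 * (1 / 2 + ε) ^ m) := by
    calc eW ε m z z' ≤ ENNReal.ofReal ((1 + 2 * ε) ^ m) * eD m z z' := eW_le_scaled ε hε0 m z z'
      _ ≤ ENNReal.ofReal ((1 + 2 * ε) ^ m) * ENNReal.ofReal (2 * (1 / 2 : ℝ) ^ m) :=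
          mul_le_mul_right hzz _
      _ = ENNReal.ofReal ((1 + 2 * ε) ^ m * (2 * (1 / 2 : ℝ) ^ m)) :=
          (ENNReal.ofReal_mul (by positivity)).symm
      _ = ENNReal.ofReal (2 * (1 / 2 + ε) ^ m) := by
          congr 1
          rw [mul_comm (2 : ℝ) ((1 / 2 : ℝ) ^ m), ← mul_assoc, ← mul_pow]
          rw [show (1 + 2 * ε) * (1 / 2 : ℝ) = 1 / 2 + ε by ring]
          ring
  -- assemble
  have main : eW ε (m + j) x y ≤ ENNReal.ofReal (Sδ + (2 * (1 / 2 + ε) ^ m + Sδ)) := by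
    calc eW ε (m + j) x y
        ≤ eW ε (m + j) x (incl m j z) +
          (eW ε (m + j) (incl m j z) (incl m j z') + eW ε (m + j) (incl m j z') y) :=
          le_trans (eW_triangle _ _ _ (incl m j z) _)
            (add_le_add_right (eW_triangle _ _ _ (incl m j z') _) _)
      _ ≤ ENNReal.ofReal Sδ +
          (ENNReal.ofReal (2 * (1 / 2 + ε) ^ m) + ENNReal.ofReal Sδ) := by
          refine add_le_add hWz (add_le_add (le_trans (eW_incl_le ε m j z z') hWzz) ?_)
          rw [eW_symm]; exact hWz'
      _ = ENNReal.ofReal (Sδ + (2 * (1 / 2 + ε) ^ m + Sδ)) := by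
          rw [← ENNReal.ofReal_add (by positivity : (0:ℝ) ≤ 2 * (1 / 2 + ε) ^ m) hSδ_nonneg,
            ← ENNReal.ofReal_add hSδ_nonneg
              (add_nonneg (by positivity : (0:ℝ) ≤ 2 * (1 / 2 + ε) ^ m) hSδ_nonneg)]
  refine le_trans main (ENNReal.ofReal_le_ofReal ?_)
  have halg : 2 * ((1 / 2 + ε) ^ (m + 1) / (1 / 2 - ε)) + 2 * (1 / 2 + ε) ^ m
      = 8 / (1 - 4 * ε ^ 2) * (1 / 2 + ε) ^ (m + 1) := by
    have hs' : (1 / 2 - ε : ℝ) ≠ 0 := ne_of_gt hs0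
    have h4' : (1 - 4 * ε ^ 2 : ℝ) ≠ 0 := ne_of_gt h4
    have h2 : 8 / (1 - 4 * ε ^ 2) = 2 / ((1 / 2 - ε) * (1 / 2 + ε)) := by
      rw [div_eq_div_iff h4' (ne_of_gt (mul_pos hs0 hδ0))]
      ring
    rw [h2]
    exact alg_aux (by ring) hs' (ne_of_gt hδ0) m
  have hrp : (1 / 2 + ε : ℝ) ^ (m + 1) ≤ d ^ α := by
    rw [← pow_snowflake ε α hα (m + 1)]
    exact Real.rpow_le_rpow (by positivity) hm.le hα0.le
  calc Sδ + (2 * (1 / 2 + ε) ^ m + Sδ)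
      ≤ 2 * ((1 / 2 + ε) ^ (m + 1) / (1 / 2 - ε)) + 2 * (1 / 2 + ε) ^ m := by linarith
    _ = 8 / (1 - 4 * ε ^ 2) * (1 / 2 + ε) ^ (m + 1) := halg
    _ ≤ 8 / (1 - 4 * ε ^ 2) * d ^ α := by
        refine mul_le_mul_of_nonneg_left hrp (by positivity)


/-- Let `ε ∈ (0, 1/2)` and let `α ∈ (0, 1)` be defined by
`(1/2)^α = 1/2 + ε`.  Then for all vertices `x, y` of `D k` :
`(d_{D_k}(x,y))^α ≤ d_{W_k}(x,y) ≤ (8/(1 - 4ε²)) * (d_{D_k}(x,y))^α`,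
i.e., the identity maps from the weighted diamonds `W k` to the `α`-snowflakes of the
diamonds `D k` have uniformly bounded distortion. -/
theorem statement8 (ε : ℝ) (hε0 : 0 < ε) (hε : ε < 1 / 2)
    (α : ℝ) (hα0 : 0 < α) (hα1 : α < 1) (hα : (1 / 2 : ℝ) ^ α = 1 / 2 + ε)
    (k : ℕ) (x y : Vert k) :
    dD k x y ^ α ≤ dW ε k x y ∧ dW ε k x y ≤ 8 / (1 - 4 * ε ^ 2) * dD k x y ^ α := by
  have hWfin := eW_ne_top ε hε0.le k x y
  have hDfin := eD_ne_top k x y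
  have hdW : dW ε k x y = (eW ε k x y).toReal := rfl
  have hdD : dD k x y = (eD k x y).toReal := rfl
  constructor
  · rw [hdD, hdW, ENNReal.toReal_rpow]
    exact ENNReal.toReal_mono hWfin (snowflake_le ε α hα0 hα1 hα k x y)
  · by_cases hxy : x = y
    · subst hxy
      rw [hdW, hdD, eW_self, eD_self]
      simp [Real.zero_rpow (ne_of_gt hα0)]
    · have h := upper_main ε hε0 hε α hα0 hα k x y hxy
      rw [hdW, hdD]
      have h4 : (0 : ℝ) < 1 - 4 * ε ^ 2 := by nlinarith
      have h' := ENNReal.toReal_mono ENNReal.ofReal_ne_top h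
      rwa [ENNReal.toReal_ofReal
        (mul_nonneg (le_of_lt (div_pos (by norm_num) h4))
          (Real.rpow_nonneg ENNReal.toReal_nonneg α))] at h'


end Stmt
end
end
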